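/- arXiv:2310.19006 — 4 statements merged into one kernel-verified Lean document; each statement's English description precedes it below -/
import Mathlib

section
/- Let (H,X) be a conjunctive query and ℓ a positive integer. Then the treewidth of the ℓ-copy F_ℓ(H,X) is at most the treewidth of the extension graph Γ(H,X). -/
/-- The canonical map `γ` from the vertices of the `ℓ`-copy `F_ℓ(H,X)` to the
vertices of `H`: each `x ∈ X` goes to itself, and each clone `(y,i)` goes to `y`. -/
def gammaMap {V : Type*} (X : Set V) (ℓ : ℕ) :
    (↥X ⊕ (↥(Xᶜ) × Fin ℓ)) → V
  | Sum.inl x => ↑x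
  | Sum.inr (y, _) => ↑y

/-- The copy index of a vertex of `F_ℓ(H,X)` (if any). -/
def copyIdx {V : Type*} (X : Set V) (ℓ : ℕ) :
    (↥X ⊕ (↥(Xᶜ) × Fin ℓ)) → Option (Fin ℓ)
  | Sum.inl _ => none
  | Sum.inr (_, i) => some i

/-- The `ℓ`-copy `F_ℓ(H,X)`: vertex set `X ∪ ((V(H)∖X) × [ℓ])`; two vertices are
adjacent iff their `γ`-images are adjacent in `H` and, when both lie in the cloned
part, their copy indices coincide.  (Edges within `X`, edges `{u,(v,i)}` for all
indices `i`, and edges `{(u,i),(v,i)}` within each copy.) -/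
def copyGraph {V : Type*} (H : SimpleGraph V) (X : Set V) (ℓ : ℕ) :
    SimpleGraph (↥X ⊕ (↥(Xᶜ) × Fin ℓ)) where
  Adj a b := H.Adj (gammaMap X ℓ a) (gammaMap X ℓ b) ∧
    ∀ i j, copyIdx X ℓ a = some i → copyIdx X ℓ b = some j → i = j
  symm := by
    constructor
    intro a b h
    exact ⟨h.1.symm, fun i j hi hj => (h.2 j i hj hi).symm⟩
  loopless := by
    constructor
    intro a h
    exact H.irrefl h.1

/-- A tree decomposition of a simple graph `G`. -/
structure TreeDecomp {V : Type*} (G : SimpleGraph V) where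
  /-- the index type of the decomposition tree -/
  ι : Type
  /-- the decomposition tree -/
  T : SimpleGraph ι
  /-- `T` is a tree -/
  tree : T.IsTree
  /-- the bags -/
  bag : ι → Set V
  /-- (T1) every vertex occurs in some bag -/
  covers_vertex : ∀ v : V, ∃ t, v ∈ bag t
  /-- (T3) every edge is contained in some bag -/
  covers_edge : ∀ ⦃u v : V⦄, G.Adj u v → ∃ t, u ∈ bag t ∧ v ∈ bag t
  /-- (T2) for every vertex the set of bags containing it induces a connected subtree -/
  bags_connected : ∀ v : V, (T.induce {t | v ∈ bag t}).Connected

/-- `G` has a tree decomposition of width at most `k`. -/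
def TreewidthAtMost {V : Type*} (G : SimpleGraph V) (k : ℕ) : Prop :=
  ∃ D : TreeDecomp G, ∀ t, (D.bag t).ncard ≤ k + 1

/-- The treewidth of a (finite) simple graph: the least `k` such that `G` has a
tree decomposition of width `k`. -/
noncomputable def treewidth {V : Type*} (G : SimpleGraph V) : ℕ :=
  sInf {k | TreewidthAtMost G k}

/-- The extension `Γ(H,X)` of a conjunctive query `(H,X)`: the graph on `V(H)` whose
edges are those of `H` together with all pairs `{u,v}` of distinct vertices of `X`
such that some connected component of the induced subgraph `H[V(H)∖X]` is adjacent in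
`H` to both `u` and `v`. -/
def extGraph {V : Type*} (H : SimpleGraph V) (X : Set V) : SimpleGraph V where
  Adj u v := H.Adj u v ∨ (u ≠ v ∧ u ∈ X ∧ v ∈ X ∧
    ∃ (w₁ w₂ : ↥(Xᶜ)), H.Adj u ↑w₁ ∧ H.Adj v ↑w₂ ∧ (H.induce Xᶜ).Reachable w₁ w₂)
  symm := by
    constructor
    intro u v h
    rcases h with h | ⟨hne, hu, hv, w₁, w₂, h1, h2, h3⟩
    · exact Or.inl h.symm
    · exact Or.inr ⟨hne.symm, hv, hu, w₂, w₁, h2, h1, h3.symm⟩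
  loopless := by
    constructor
    intro u h
    rcases h with h | ⟨hne, _⟩
    · exact H.irrefl h
    · exact hne rfl



namespace Stmt5Aux

open SimpleGraph

variable {ι : Type*} {T : SimpleGraph ι}

/-- A set of vertices closed under (unique) paths between its elements. -/
def PathClosed (T : SimpleGraph ι) (A : Set ι) : Prop :=
  ∀ ⦃s t : ι⦄, s ∈ A → t ∈ A → ∀ p : T.Walk s t, p.IsPath → ∀ u ∈ p.support, u ∈ A

lemma path_unique (htree : T.IsTree) {s t : ι} (p q : T.Walk s t)
    (hp : p.IsPath) (hq : q.IsPath) : p = q := by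
  obtain ⟨r, -, hr⟩ := htree.existsUnique_path s t
  rw [hr p hp, hr q hq]

lemma pathClosed_inter {A B : Set ι} (hA : PathClosed T A) (hB : PathClosed T B) :
    PathClosed T (A ∩ B) := fun _ _ hs ht p hp u hu =>
  ⟨hA hs.1 ht.1 p hp u hu, hB hs.2 ht.2 p hp u hu⟩

lemma pathClosed_of_connected (htree : T.IsTree) {A : Set ι}
    (h : (T.induce A).Connected) : PathClosed T A := by
  classical
  intro s t hs ht p hp u hu
  obtain ⟨w⟩ := h.preconnected ⟨s, hs⟩ ⟨t, ht⟩
  have hb : ∀ x ∈ (w.map (SimpleGraph.Embedding.induce A).toHom).bypass.support, x ∈ A := by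
    intro x hx
    have hx2 := Walk.support_bypass_subset _ hx
    rw [Walk.support_map] at hx2
    obtain ⟨⟨x', hx'⟩, -, rfl⟩ := List.mem_map.1 hx2
    exact hx'
  have heq : p = (w.map (SimpleGraph.Embedding.induce A).toHom).bypass :=
    path_unique htree _ _ hp (Walk.bypass_isPath _)
  exact hb u (heq ▸ hu)

lemma helly3 (htree : T.IsTree) {A B C : Set ι} (hA : PathClosed T A)
    (hB : PathClosed T B) (hC : PathClosed T C) {y z : ι}
    (hyB : y ∈ B) (hyC : y ∈ C) (hzC : z ∈ C) (hzA : z ∈ A) :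
    ∀ (n : ℕ) (x : ι), x ∈ A → x ∈ B → ∀ p : T.Walk x z, p.IsPath → p.length ≤ n →
      ∃ m, m ∈ A ∧ m ∈ B ∧ m ∈ C := by
  classical
  intro n
  induction n with
  | zero =>
    intro x hxA hxB p hp hn
    cases p with
    | nil => exact ⟨_, hxA, hxB, hzC⟩
    | cons h q => simp [Walk.length_cons] at hn
  | succ n ih =>
    intro x hxA hxB p hp hn
    cases p with
    | nil => exact ⟨_, hxA, hxB, hzC⟩
    | @cons _ x' _ h q =>
      have hx'A : x' ∈ A := hA hxA hzA (Walk.cons h q) hp x' (by simp)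
      by_cases hx'B : x' ∈ B
      · exact ih x' hx'A hx'B q hp.of_cons (by simpa [Walk.length_cons, Nat.succ_le_succ_iff] using hn)
      · obtain ⟨qxy, hqxy, -⟩ := htree.existsUnique_path x y
        have hq_sub : ∀ u ∈ qxy.support, u ∈ B := hB hxB hyB qxy hqxy
        obtain ⟨r, hr, -⟩ := htree.existsUnique_path y z
        have hr_sub : ∀ u ∈ r.support, u ∈ C := hC hyC hzC r hr
        have hxny : x' ∉ qxy.support := fun hmem => hx'B (hq_sub _ hmem)
        have hpeq : Walk.cons h q = (qxy.append r).bypass :=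
          path_unique htree _ _ hp (Walk.bypass_isPath _)
        have hx'mem : x' ∈ (qxy.append r).support := by
          apply Walk.support_bypass_subset
          rw [← hpeq]; simp
        have hx'r : x' ∈ r.support := by
          rcases (Walk.mem_support_append_iff _ _).1 hx'mem with h1 | h1
          · exact absurd h1 hxny
          · exact h1
        have hw : (Walk.cons h.symm qxy).IsPath := hqxy.cons hxny
        have hrt : (r.takeUntil x' hx'r).IsPath := hr.takeUntil hx'r
        have heq : Walk.cons h.symm qxy = (r.takeUntil x' hx'r).reverse :=
          path_unique htree _ _ hw hrt.reverse
        have hxmem : x ∈ ((r.takeUntil x' hx'r).reverse).support := by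
          rw [← heq]; simp
        have hxC : x ∈ C := by
          rw [Walk.support_reverse, List.mem_reverse] at hxmem
          exact hr_sub _ (Walk.support_takeUntil_subset _ hx'r hxmem)
        exact ⟨x, hxA, hxB, hxC⟩

lemma helly3' (htree : T.IsTree) {A B C : Set ι} (hA : PathClosed T A)
    (hB : PathClosed T B) (hC : PathClosed T C) {x y z : ι}
    (hxA : x ∈ A) (hxB : x ∈ B) (hyB : y ∈ B) (hyC : y ∈ C)
    (hzC : z ∈ C) (hzA : z ∈ A) : ∃ m, m ∈ A ∧ m ∈ B ∧ m ∈ C := by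
  obtain ⟨p, hp, -⟩ := htree.existsUnique_path x z
  exact helly3 htree hA hB hC hyB hyC hzC hzA p.length x hxA hxB p hp le_rfl

lemma hellyFam (htree : T.IsTree) {α : Type*} [DecidableEq α] (S : Finset α) (f : α → Set ι)
    (hcl : ∀ a ∈ S, PathClosed T (f a))
    (hpair : ∀ a ∈ S, ∀ b ∈ S, (f a ∩ f b).Nonempty) :
    ∃ t : ι, ∀ a ∈ S, t ∈ f a := by
  induction S using Finset.induction_on generalizing f with
  | empty =>
    have : Nonempty ι := htree.isConnected.nonempty
    exact ⟨Classical.arbitrary ι, by simp⟩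
  | @insert a S ha ih =>
    rcases S.eq_empty_or_nonempty with rfl | ⟨b₀, hb₀⟩
    · obtain ⟨t, ht⟩ := hpair a (by simp) a (by simp)
      exact ⟨t, by simpa using ht.1⟩
    · have hcl' : ∀ b ∈ S, PathClosed T (f b ∩ f a) := fun b hb =>
        pathClosed_inter (hcl b (by simp [hb])) (hcl a (by simp))
      have hpair' : ∀ b ∈ S, ∀ c ∈ S, ((f b ∩ f a) ∩ (f c ∩ f a)).Nonempty := by
        intro b hb c hc
        obtain ⟨x, hx⟩ := hpair b (by simp [hb]) c (by simp [hc])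
        obtain ⟨y, hy⟩ := hpair c (by simp [hc]) a (by simp)
        obtain ⟨z, hz⟩ := hpair a (by simp) b (by simp [hb])
        obtain ⟨m, hmA, hmB, hmC⟩ := helly3' htree (hcl b (by simp [hb])) (hcl c (by simp [hc]))
          (hcl a (by simp)) hx.1 hx.2 hy.1 hy.2 hz.1 hz.2
        exact ⟨m, ⟨hmA, hmC⟩, hmB, hmC⟩
      obtain ⟨t, ht⟩ := ih _ hcl' hpair'
      refine ⟨t, ?_⟩
      intro c hc
      rcases Finset.mem_insert.1 hc with rfl | hc
      · exact (ht b₀ hb₀).2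
      · exact (ht c hc).1

lemma color_bridge {W : Type*} (G : SimpleGraph W) {u v : W} (h : G.Adj u v)
    (c : W → Prop) (hu : c u) (hv : ¬ c v)
    (huniq : ∀ x y, G.Adj x y → c x → ¬ c y → s(x, y) = s(u, v)) :
    G.IsBridge s(u, v) := by
  rw [isBridge_iff]
  refine fun hre => ?_
  have aux : ∀ (a b : W) (w : (G \ SimpleGraph.fromEdgeSet {s(u,v)}).Walk a b),
      c a → ¬ c b → False := by
    intro a b w
    induction w with
    | nil => exact fun h1 h2 => h2 h1
    | @cons a x b hadj p ihp =>
      intro hca hcb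
      by_cases hx : c x
      · exact ihp hx hcb
      · have h1 : G.Adj a x := ((SimpleGraph.sdiff_adj _ _ _ _).1 hadj).1
        have h2 : ¬ (SimpleGraph.fromEdgeSet {s(u,v)}).Adj a x :=
          ((SimpleGraph.sdiff_adj _ _ _ _).1 hadj).2
        have heq := huniq a x h1 hca hx
        rw [SimpleGraph.fromEdgeSet_adj] at h2
        push_neg at h2
        exact h1.ne (h2 (by rw [Set.mem_singleton_iff]; exact heq))
  obtain ⟨w⟩ := hre
  exact aux u v w hu hv

end Stmt5Aux

set_option linter.unusedSectionVars false

namespace Stmt5Aux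

section Construction

open SimpleGraph

variable {V : Type*} [Fintype V] (H : SimpleGraph V) (X : Set V) (ℓ : ℕ)
variable {κ : Type} (cmp : ↥(Xᶜ) → κ)

/-- The set of `X`-neighbours of the component indexed by `c`. -/
def Ncl (c : κ) : Set V := {x | x ∈ X ∧ ∃ y : ↥(Xᶜ), cmp y = c ∧ H.Adj x ↑y}

lemma ncl_clique (hcmp : ∀ y y', cmp y = cmp y' ↔ (H.induce Xᶜ).Reachable y y')
    {c : κ} {x y : V} (hx : x ∈ Ncl H X cmp c) (hy : y ∈ Ncl H X cmp c) (hne : x ≠ y) :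
    (extGraph H X).Adj x y := by
  obtain ⟨hxX, w1, hw1, ha1⟩ := hx
  obtain ⟨hyX, w2, hw2, ha2⟩ := hy
  exact Or.inr ⟨hne, hxX, hyX, w1, w2, ha1, ha2, (hcmp w1 w2).1 (hw1.trans hw2.symm)⟩

variable (D : TreeDecomp (extGraph H X))

lemma exists_bag_ncl (hcmp : ∀ y y', cmp y = cmp y' ↔ (H.induce Xᶜ).Reachable y y')
    (c : κ) : ∃ t, ∀ x ∈ Ncl H X cmp c, x ∈ D.bag t := by
  classical
  obtain ⟨t, ht⟩ := hellyFam D.tree (Set.Finite.toFinset (Set.toFinite (Ncl H X cmp c)))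
      (fun x => {s | x ∈ D.bag s})
      (fun a _ => pathClosed_of_connected D.tree (D.bags_connected a))
      (by
        intro a ha b hb
        simp only [Set.Finite.mem_toFinset] at ha hb
        by_cases hab : a = b
        · subst hab
          obtain ⟨t, ht⟩ := D.covers_vertex a
          exact ⟨t, ht, ht⟩
        · obtain ⟨t, h1, h2⟩ := D.covers_edge (ncl_clique H X cmp hcmp ha hb hab)
          exact ⟨t, h1, h2⟩)
  exact ⟨t, fun x hx => ht x ((Set.Finite.mem_toFinset _).2 hx)⟩

variable (att : κ → D.ι)

/-- The tree of the glued decomposition. -/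
def NT : SimpleGraph (D.ι ⊕ (κ × Fin ℓ × D.ι)) where
  Adj n m := match n, m with
    | Sum.inl t, Sum.inl t' => D.T.Adj t t'
    | Sum.inl t, Sum.inr (c, _, t') => t = att c ∧ t' = att c
    | Sum.inr (c, _, t), Sum.inl t' => t = att c ∧ t' = att c
    | Sum.inr (c, i, t), Sum.inr (c', i', t') => c = c' ∧ i = i' ∧ D.T.Adj t t'
  symm := by
    constructor
    rintro (t | ⟨c, i, t⟩) (t' | ⟨c', i', t'⟩) h
    · exact h.symm
    · exact ⟨h.2, h.1⟩
    · exact ⟨h.2, h.1⟩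
    · exact ⟨h.1.symm, h.2.1.symm, h.2.2.symm⟩
  loopless := by
    constructor
    rintro (t | ⟨c, i, t⟩) h
    · exact D.T.irrefl h
    · exact D.T.irrefl h.2.2

/-- The bags of the glued decomposition. -/
def nbag : (D.ι ⊕ (κ × Fin ℓ × D.ι)) → Set (↥X ⊕ (↥(Xᶜ) × Fin ℓ))
  | Sum.inl t => {w | ∃ x : ↥X, w = Sum.inl x ∧ ↑x ∈ D.bag t}
  | Sum.inr (c, i, t) => {w | (∃ x : ↥X, w = Sum.inl x ∧ ↑x ∈ D.bag t ∧ ↑x ∈ Ncl H X cmp c)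
      ∨ (∃ y : ↥(Xᶜ), w = Sum.inr (y, i) ∧ cmp y = c ∧ ↑y ∈ D.bag t)}

/-- generic transfer of reachability along a vertex map between induced subgraphs -/
lemma reach_induce_map {α β : Type*} {G : SimpleGraph α} {G' : SimpleGraph β} {S : Set α}
    {A : Set β} (g : α → β)
    (hadj : ∀ u v, u ∈ S → v ∈ S → G.Adj u v → G'.Adj (g u) (g v))
    (hmem : ∀ u ∈ S, g u ∈ A) {s t : α} (hs : s ∈ S) (ht : t ∈ S)
    (h : (G.induce S).Reachable ⟨s, hs⟩ ⟨t, ht⟩) :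
    (G'.induce A).Reachable ⟨g s, hmem s hs⟩ ⟨g t, hmem t ht⟩ :=
  h.map (⟨fun u => ⟨g u.1, hmem u.1 u.2⟩,
    fun {u v} h => hadj u.1 v.1 u.2 v.2 h⟩ : (G.induce S) →g (G'.induce A))

lemma reach_map' {α β : Type*} {G : SimpleGraph α} {G' : SimpleGraph β} (g : α → β)
    (hadj : ∀ u v, G.Adj u v → G'.Adj (g u) (g v)) {s t : α} (h : G.Reachable s t) :
    G'.Reachable (g s) (g t) :=
  h.map ⟨g, fun {u v} h => hadj u v h⟩

lemma mem_nbag_inl_inl {x : ↥X} {t : D.ι} :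
    Sum.inl x ∈ nbag H X ℓ cmp D (Sum.inl t) ↔ ↑x ∈ D.bag t := by
  simp [nbag]

lemma mem_nbag_inl_inr {x : ↥X} {c : κ} {i : Fin ℓ} {t : D.ι} :
    Sum.inl x ∈ nbag H X ℓ cmp D (Sum.inr (c, i, t)) ↔
      ↑x ∈ D.bag t ∧ ↑x ∈ Ncl H X cmp c := by
  simp [nbag]

lemma mem_nbag_inr_inl {y : ↥(Xᶜ)} {i : Fin ℓ} {t : D.ι} :
    Sum.inr (y, i) ∉ nbag H X ℓ cmp D (Sum.inl t) := by
  simp [nbag]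

lemma mem_nbag_inr_inr {y : ↥(Xᶜ)} {i : Fin ℓ} {c : κ} {j : Fin ℓ} {t : D.ι} :
    Sum.inr (y, i) ∈ nbag H X ℓ cmp D (Sum.inr (c, j, t)) ↔
      i = j ∧ cmp y = c ∧ ↑y ∈ D.bag t := by
  constructor
  · rintro (⟨x, hx, -⟩ | ⟨y', hy', hc, hb⟩)
    · exact absurd hx (by simp)
    · obtain ⟨rfl, rfl⟩ : y' = y ∧ i = j := by
        have := Sum.inr.inj hy'
        exact ⟨(Prod.ext_iff.1 this).1.symm, (Prod.ext_iff.1 this).2⟩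
      exact ⟨rfl, hc, hb⟩
  · rintro ⟨rfl, rfl, hb⟩
    exact Or.inr ⟨y, rfl, rfl, hb⟩

lemma nbags_conn_inr (y : ↥(Xᶜ)) (i : Fin ℓ) :
    ((NT H X ℓ D att).induce {n | Sum.inr (y, i) ∈ nbag H X ℓ cmp D n}).Connected := by
  classical
  set A := {n | Sum.inr (y, i) ∈ nbag H X ℓ cmp D n} with hA
  set S := {s : D.ι | (y : V) ∈ D.bag s} with hS
  have hmem : ∀ s ∈ S, (Sum.inr (cmp y, i, s) : D.ι ⊕ (κ × Fin ℓ × D.ι)) ∈ A := fun s hs =>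
    (mem_nbag_inr_inr H X ℓ cmp D).2 ⟨rfl, rfl, hs⟩
  rw [SimpleGraph.connected_iff]
  constructor
  · rintro ⟨(t | ⟨c, j, t⟩), ha⟩ ⟨m, hb⟩
    · exact absurd ha (mem_nbag_inr_inl H X ℓ cmp D)
    rcases m with t' | ⟨c', j', t'⟩
    · exact absurd hb (mem_nbag_inr_inl H X ℓ cmp D)
    · obtain ⟨rfl, rfl, hyt⟩ := (mem_nbag_inr_inr H X ℓ cmp D).1 ha
      obtain ⟨rfl, rfl, hyt'⟩ := (mem_nbag_inr_inr H X ℓ cmp D).1 hb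
      exact reach_induce_map (G' := NT H X ℓ D att) (g := fun s => Sum.inr (cmp y, i, s))
        (fun u v _ _ h => ⟨rfl, rfl, h⟩) hmem hyt hyt'
        ((D.bags_connected ↑y).preconnected ⟨t, hyt⟩ ⟨t', hyt'⟩)
  · obtain ⟨t, ht⟩ := D.covers_vertex ↑y
    exact ⟨⟨Sum.inr (cmp y, i, t), hmem t ht⟩⟩

lemma nbags_conn_inl (hatt : ∀ c, ∀ x ∈ Ncl H X cmp c, x ∈ D.bag (att c)) (x : ↥X) :
    ((NT H X ℓ D att).induce {n | Sum.inl x ∈ nbag H X ℓ cmp D n}).Connected := by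
  classical
  set A := {n | Sum.inl x ∈ nbag H X ℓ cmp D n} with hA
  set S := {s : D.ι | (x : V) ∈ D.bag s} with hS
  have hmemS : ∀ s ∈ S, (Sum.inl s : D.ι ⊕ (κ × Fin ℓ × D.ι)) ∈ A := fun s hs =>
    (mem_nbag_inl_inl H X ℓ cmp D).2 hs
  have base : ∀ (t t' : D.ι) (ht : t ∈ S) (ht' : t' ∈ S),
      ((NT H X ℓ D att).induce A).Reachable ⟨Sum.inl t, hmemS t ht⟩ ⟨Sum.inl t', hmemS t' ht'⟩ := by
    intro t t' ht ht'
    exact reach_induce_map (g := Sum.inl) (fun u v _ _ h => h) hmemS ht ht'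
      ((D.bags_connected ↑x).preconnected ⟨t, ht⟩ ⟨t', ht'⟩)
  have key : ∀ (c : κ) (j : Fin ℓ) (t : D.ι) (h : (Sum.inr (c, j, t) : D.ι ⊕ (κ × Fin ℓ × D.ι)) ∈ A),
      ∃ (s : D.ι) (hs : s ∈ S),
        ((NT H X ℓ D att).induce A).Reachable ⟨Sum.inr (c, j, t), h⟩ ⟨Sum.inl s, hmemS s hs⟩ := by
    intro c j t h
    obtain ⟨hbag, hncl⟩ := (mem_nbag_inl_inr H X ℓ cmp D).1 h
    have hattS : att c ∈ S := hatt c ↑x hncl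
    have hmem2 : ∀ s ∈ S, (Sum.inr (c, j, s) : D.ι ⊕ (κ × Fin ℓ × D.ι)) ∈ A := fun s hs =>
      (mem_nbag_inl_inr H X ℓ cmp D).2 ⟨hs, hncl⟩
    have r1 := reach_induce_map (G' := NT H X ℓ D att) (g := fun s => Sum.inr (c, j, s))
      (fun u v _ _ h => ⟨rfl, rfl, h⟩) hmem2 hbag hattS
      ((D.bags_connected ↑x).preconnected ⟨t, hbag⟩ ⟨att c, hattS⟩)
    have r2 : ((NT H X ℓ D att).induce A).Adj ⟨Sum.inr (c, j, att c), hmem2 _ hattS⟩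
        ⟨Sum.inl (att c), hmemS _ hattS⟩ := ⟨rfl, rfl⟩
    exact ⟨att c, hattS, r1.trans r2.reachable⟩
  rw [SimpleGraph.connected_iff]
  refine ⟨?_, ?_⟩
  · rintro ⟨(t | ⟨c, j, t⟩), ha⟩ ⟨(t' | ⟨c', j', t'⟩), hb⟩
    · exact base t t' ((mem_nbag_inl_inl H X ℓ cmp D).1 ha) ((mem_nbag_inl_inl H X ℓ cmp D).1 hb)
    · obtain ⟨s, hs, r⟩ := key c' j' t' hb
      exact (base t s ((mem_nbag_inl_inl H X ℓ cmp D).1 ha) hs).trans r.symm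
    · obtain ⟨s, hs, r⟩ := key c j t ha
      exact r.trans (base s t' hs ((mem_nbag_inl_inl H X ℓ cmp D).1 hb))
    · obtain ⟨s, hs, r⟩ := key c j t ha
      obtain ⟨s', hs', r'⟩ := key c' j' t' hb
      exact r.trans ((base s s' hs hs').trans r'.symm)
  · obtain ⟨t, ht⟩ := D.covers_vertex ↑x
    exact ⟨⟨Sum.inl t, hmemS t ht⟩⟩

lemma ncovers_vertex : ∀ w, ∃ n, w ∈ nbag H X ℓ cmp D n
  | Sum.inl x => by
    obtain ⟨t, ht⟩ := D.covers_vertex ↑x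
    exact ⟨Sum.inl t, ⟨x, rfl, ht⟩⟩
  | Sum.inr (y, i) => by
    obtain ⟨t, ht⟩ := D.covers_vertex ↑y
    exact ⟨Sum.inr (cmp y, i, t), Or.inr ⟨y, rfl, rfl, ht⟩⟩

lemma ncovers_edge (hcmp : ∀ y y', cmp y = cmp y' ↔ (H.induce Xᶜ).Reachable y y') :
    ∀ ⦃w w' : ↥X ⊕ (↥(Xᶜ) × Fin ℓ)⦄, (copyGraph H X ℓ).Adj w w' →
      ∃ n, w ∈ nbag H X ℓ cmp D n ∧ w' ∈ nbag H X ℓ cmp D n := by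
  rintro (x | ⟨y, i⟩) (x' | ⟨y', i'⟩) h
  · obtain ⟨t, h1, h2⟩ := D.covers_edge (Or.inl h.1)
    exact ⟨Sum.inl t, ⟨x, rfl, h1⟩, ⟨x', rfl, h2⟩⟩
  · obtain ⟨t, h1, h2⟩ := D.covers_edge (G := extGraph H X) (Or.inl h.1)
    exact ⟨Sum.inr (cmp y', i', t),
      Or.inl ⟨x, rfl, h1, x.2, y', rfl, h.1⟩,
      Or.inr ⟨y', rfl, rfl, h2⟩⟩
  · obtain ⟨t, h1, h2⟩ := D.covers_edge (G := extGraph H X) (Or.inl h.1)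
    exact ⟨Sum.inr (cmp y, i, t),
      Or.inr ⟨y, rfl, rfl, h1⟩,
      Or.inl ⟨x', rfl, h2, x'.2, y, rfl, h.1.symm⟩⟩
  · have hii : i = i' := h.2 i i' rfl rfl
    subst hii
    have hcc : cmp y = cmp y' := (hcmp y y').2 (SimpleGraph.Adj.reachable (by exact h.1))
    obtain ⟨t, h1, h2⟩ := D.covers_edge (G := extGraph H X) (Or.inl h.1)
    exact ⟨Sum.inr (cmp y, i, t),
      Or.inr ⟨y, rfl, rfl, h1⟩,
      Or.inr ⟨y', rfl, hcc.symm, h2⟩⟩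

lemma nbag_ncard (n : D.ι ⊕ (κ × Fin ℓ × D.ι)) :
    (nbag H X ℓ cmp D n).ncard ≤ (D.bag (Sum.elim id (fun p => p.2.2) n)).ncard := by
  classical
  have hfin : (D.bag (Sum.elim id (fun p => p.2.2) n)).Finite := Set.toFinite _
  have hinj : Set.InjOn (gammaMap X ℓ) (nbag H X ℓ cmp D n) := by
    cases n with
    | inl t =>
      rintro a ha b hb hab
      obtain ⟨xa, rfl, -⟩ := ha
      obtain ⟨xb, rfl, -⟩ := hb
      simp only [gammaMap] at hab
      exact congrArg Sum.inl (Subtype.ext hab)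
    | inr p =>
      obtain ⟨c, i, t⟩ := p
      rintro a (⟨xa, rfl, -⟩ | ⟨ya, rfl, -⟩) b (⟨xb, rfl, -⟩ | ⟨yb, rfl, -⟩) hab <;>
        simp only [gammaMap] at hab
      · exact congrArg Sum.inl (Subtype.ext hab)
      · exact absurd (hab ▸ xa.2) yb.2
      · exact absurd (hab ▸ ya.2) (by simpa using xb.2)
      · exact congrArg Sum.inr (Prod.ext (Subtype.ext hab) rfl)
  have hsub : gammaMap X ℓ '' nbag H X ℓ cmp D n ⊆ D.bag (Sum.elim id (fun p => p.2.2) n) := by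
    rintro v ⟨a, ha, rfl⟩
    cases n with
    | inl t =>
      obtain ⟨xa, rfl, hxa⟩ := ha
      exact hxa
    | inr p =>
      obtain ⟨c, i, t⟩ := p
      rcases ha with ⟨xa, rfl, hxa, -⟩ | ⟨ya, rfl, -, hya⟩
      · exact hxa
      · exact hya
  calc (nbag H X ℓ cmp D n).ncard
      = (gammaMap X ℓ '' nbag H X ℓ cmp D n).ncard := (Set.ncard_image_of_injOn hinj).symm
    _ ≤ _ := Set.ncard_le_ncard hsub hfin

lemma nt_connected : (NT H X ℓ D att).Connected := by
  rw [SimpleGraph.connected_iff]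
  have hne : Nonempty D.ι := D.tree.isConnected.nonempty
  have base : ∀ t t', (NT H X ℓ D att).Reachable (Sum.inl t) (Sum.inl t') := fun t t' =>
    reach_map' Sum.inl (fun u v h => h) (D.tree.isConnected.preconnected t t')
  have key : ∀ c i t, (NT H X ℓ D att).Reachable (Sum.inr (c, i, t)) (Sum.inl (att c)) := by
    intro c i t
    exact (reach_map' (G' := NT H X ℓ D att) (fun s => Sum.inr (c, i, s)) (fun u v h => ⟨rfl, rfl, h⟩)
      (D.tree.isConnected.preconnected t (att c))).trans
      (SimpleGraph.Adj.reachable ⟨rfl, rfl⟩)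
  refine ⟨?_, ⟨Sum.inl (Classical.arbitrary D.ι)⟩⟩
  rintro (t | ⟨c, i, t⟩) (t' | ⟨c', i', t'⟩)
  · exact base t t'
  · exact (base t (att c')).trans (key c' i' t').symm
  · exact (key c i t).trans (base (att c) t')
  · exact (key c i t).trans ((base (att c) (att c')).trans (key c' i' t').symm)

lemma side_facts {α : Type*} {G : SimpleGraph α} (hac : G.IsAcyclic) {t t' : α} (h : G.Adj t t') :
    ∃ c : α → Prop, c t ∧ ¬ c t' ∧ ∀ u v, G.Adj u v → s(u, v) ≠ s(t, t') → (c u ↔ c v) := by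
  have hb := SimpleGraph.isAcyclic_iff_forall_adj_isBridge.1 hac h
  rw [SimpleGraph.isBridge_iff] at hb
  refine ⟨fun u => (G \ SimpleGraph.fromEdgeSet {s(t, t')}).Reachable t u,
    SimpleGraph.Reachable.refl t, fun hr => hb hr, ?_⟩
  intro u v huv hne
  have hadj : (G \ SimpleGraph.fromEdgeSet {s(t, t')}).Adj u v := by
    rw [SimpleGraph.sdiff_adj]
    refine ⟨huv, ?_⟩
    rw [SimpleGraph.fromEdgeSet_adj]
    rintro ⟨h1, -⟩
    exact hne (by simpa using h1)
  exact ⟨fun h => h.trans hadj.reachable, fun h => h.trans hadj.symm.reachable⟩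

lemma bridge_base {t t' : D.ι} (h : D.T.Adj t t') :
    (NT H X ℓ D att).IsBridge s(Sum.inl t, Sum.inl t') := by
  obtain ⟨c₀, hct, hct', hstep⟩ := side_facts D.tree.IsAcyclic h
  refine color_bridge _ (h : (NT H X ℓ D att).Adj (Sum.inl t) (Sum.inl t'))
    (fun n => match n with
      | Sum.inl s => c₀ s
      | Sum.inr (d, _, _) => c₀ (att d)) hct hct' ?_
  rintro (s | ⟨d, j, s⟩) (s' | ⟨d', j', s'⟩) hadj hcs hcs'
  · by_cases he : s(s, s') = s(t, t')
    · rcases Sym2.eq_iff.1 he with ⟨rfl, rfl⟩ | ⟨rfl, rfl⟩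
      · rfl
      · exact Sym2.eq_swap
    · exact absurd ((hstep s s' hadj he).1 hcs) hcs'
  · obtain ⟨h1, h2⟩ := hadj
    subst h1
    exact absurd hcs hcs'
  · obtain ⟨h1, h2⟩ := hadj
    subst h2
    exact absurd hcs hcs'
  · obtain ⟨h1, h2, h3⟩ := hadj
    subst h1
    exact absurd hcs hcs'

lemma bridge_attach (c0 : κ) (i0 : Fin ℓ) :
    (NT H X ℓ D att).IsBridge s(Sum.inl (att c0), Sum.inr (c0, i0, att c0)) := by
  have hswap : s(Sum.inl (att c0), (Sum.inr (c0, i0, att c0) : D.ι ⊕ (κ × Fin ℓ × D.ι)))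
      = s(Sum.inr (c0, i0, att c0), Sum.inl (att c0)) := Sym2.eq_swap
  rw [hswap]
  refine color_bridge _ (⟨rfl, rfl⟩ :
      (NT H X ℓ D att).Adj (Sum.inr (c0, i0, att c0)) (Sum.inl (att c0)))
    (fun n => match n with
      | Sum.inl _ => False
      | Sum.inr (d, j, _) => d = c0 ∧ j = i0) ⟨rfl, rfl⟩ (fun h => h) ?_
  rintro (s | ⟨d, j, s⟩) (s' | ⟨d', j', s'⟩) hadj hcs hcs'
  · exact absurd hcs (fun h => h)
  · exact absurd hcs (fun h => h)
  · obtain ⟨rfl, rfl⟩ := hcs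
    obtain ⟨h1, h2⟩ := hadj
    rw [h1, h2]
  · obtain ⟨rfl, rfl, -⟩ := hadj
    exact absurd hcs hcs'

lemma bridge_copy (c0 : κ) (i0 : Fin ℓ) {t t' : D.ι} (h : D.T.Adj t t') :
    (NT H X ℓ D att).IsBridge s(Sum.inr (c0, i0, t), Sum.inr (c0, i0, t')) := by
  obtain ⟨c₀, hct, hct', hstep⟩ := side_facts D.tree.IsAcyclic h
  refine color_bridge _ ((⟨rfl, rfl, h⟩ : _ ∧ _ ∧ _) :
      (NT H X ℓ D att).Adj (Sum.inr (c0, i0, t)) (Sum.inr (c0, i0, t')))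
    (fun n => match n with
      | Sum.inl _ => c₀ (att c0)
      | Sum.inr (d, j, s) => (d = c0 ∧ j = i0 ∧ c₀ s) ∨ (¬(d = c0 ∧ j = i0) ∧ c₀ (att c0)))
    (Or.inl ⟨rfl, rfl, hct⟩) ?_ ?_
  · rintro (⟨-, -, hc⟩ | ⟨hn, -⟩)
    · exact hct' hc
    · exact hn ⟨rfl, rfl⟩
  rintro (s | ⟨d, j, s⟩) (s' | ⟨d', j', s'⟩) hadj hcs hcs'
  · exact absurd hcs hcs'
  · -- inl s, inr (d', j', s') with s = att d', s' = att d'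
    obtain ⟨rfl, rfl⟩ := hadj
    by_cases hd : d' = c0 ∧ j' = i0
    · obtain ⟨rfl, rfl⟩ := hd
      exact absurd (Or.inl ⟨rfl, rfl, hcs⟩) hcs'
    · exact absurd (Or.inr ⟨hd, hcs⟩) hcs'
  · -- inr (d, j, s), inl s' with s = att d, s' = att d
    obtain ⟨rfl, rfl⟩ := hadj
    rcases hcs with ⟨rfl, rfl, hc⟩ | ⟨-, hc⟩
    · exact absurd hc hcs'
    · exact absurd hc hcs'
  · -- inr / inr
    obtain ⟨rfl, rfl, hTadj⟩ := hadj
    by_cases hd : d = c0 ∧ j = i0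
    · obtain ⟨rfl, rfl⟩ := hd
      have hcs1 : c₀ s := by
        rcases hcs with ⟨-, -, hc⟩ | ⟨hn, -⟩
        · exact hc
        · exact absurd ⟨rfl, rfl⟩ hn
      have hcs2 : ¬ c₀ s' := fun hc => hcs' (Or.inl ⟨rfl, rfl, hc⟩)
      by_cases he : s(s, s') = s(t, t')
      · rcases Sym2.eq_iff.1 he with ⟨rfl, rfl⟩ | ⟨rfl, rfl⟩
        · rfl
        · exact Sym2.eq_swap
      · exact absurd ((hstep s s' hTadj he).1 hcs1) hcs2
    · have hcs1 : c₀ (att c0) := by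
        rcases hcs with ⟨h1, h2, -⟩ | ⟨-, hc⟩
        · exact absurd ⟨h1, h2⟩ hd
        · exact hc
      exact absurd (Or.inr ⟨hd, hcs1⟩) hcs'

lemma nt_isTree : (NT H X ℓ D att).IsTree := by
  constructor
  · exact nt_connected H X ℓ D att
  · rw [SimpleGraph.isAcyclic_iff_forall_adj_isBridge]
    rintro (t | ⟨c, i, t⟩) (t' | ⟨c', i', t'⟩) hadj
    · exact bridge_base H X ℓ D att hadj
    · obtain ⟨h1, h2⟩ := hadj
      subst h1; subst h2
      exact bridge_attach H X ℓ D att c' i'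
    · obtain ⟨h1, h2⟩ := hadj
      subst h1; subst h2
      rw [Sym2.eq_swap]
      exact bridge_attach H X ℓ D att c i
    · obtain ⟨rfl, rfl, hTadj⟩ := hadj
      exact bridge_copy H X ℓ D att c i hTadj

/-- The glued tree decomposition of the `ℓ`-copy. -/
noncomputable def glueDecomp (hcmp : ∀ y y', cmp y = cmp y' ↔ (H.induce Xᶜ).Reachable y y')
    (hatt : ∀ c, ∀ x ∈ Ncl H X cmp c, x ∈ D.bag (att c)) :
    TreeDecomp (copyGraph H X ℓ) where
  ι := D.ι ⊕ (κ × Fin ℓ × D.ι)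
  T := NT H X ℓ D att
  tree := nt_isTree H X ℓ D att
  bag := nbag H X ℓ cmp D
  covers_vertex := ncovers_vertex H X ℓ cmp D
  covers_edge := ncovers_edge H X ℓ cmp D hcmp
  bags_connected := by
    rintro (x | ⟨y, i⟩)
    · exact nbags_conn_inl H X ℓ cmp D att hatt x
    · exact nbags_conn_inr H X ℓ cmp D att y i

end Construction

end Stmt5Aux

namespace Stmt5Aux

open SimpleGraph

lemma treewidthAtMost_nonempty {V : Type*} [Fintype V] (G : SimpleGraph V) :
    {k | TreewidthAtMost G k}.Nonempty := by
  refine ⟨Fintype.card V, ⟨⟨PUnit, ⊥, ?_, fun _ => Set.univ, fun v => ⟨PUnit.unit, trivial⟩,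
    fun u v _ => ⟨PUnit.unit, trivial, trivial⟩, ?_⟩, ?_⟩⟩
  · constructor
    · rw [connected_iff]
      exact ⟨fun u v => by cases u; cases v; exact Reachable.refl _, ⟨PUnit.unit⟩⟩
    · exact isAcyclic_bot
  · intro v
    rw [connected_iff]
    refine ⟨fun a b => ?_, ⟨⟨PUnit.unit, trivial⟩⟩⟩
    rw [Subsingleton.elim a b]
  · intro t
    simp only [Set.ncard_univ, Nat.card_eq_fintype_card]
    exact Nat.le_succ _

end Stmt5Aux


/-- The treewidth of the `ℓ`-copy `F_ℓ(H,X)` is at most the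
treewidth of the extension graph `Γ(H,X)`. -/
theorem stmt5 {V : Type*} [Fintype V] (H : SimpleGraph V) (X : Set V)
    (ℓ : ℕ) (hℓ : 0 < ℓ) :
    treewidth (copyGraph H X ℓ) ≤ treewidth (extGraph H X) := by

  classical
  have hmem : TreewidthAtMost (extGraph H X) (treewidth (extGraph H X)) :=
    Nat.sInf_mem (Stmt5Aux.treewidthAtMost_nonempty _)
  obtain ⟨D, hD⟩ := hmem
  haveI : Finite ((H.induce Xᶜ).ConnectedComponent) := Quot.finite _
  let e := Finite.equivFin ((H.induce Xᶜ).ConnectedComponent)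
  let cmp : ↥(Xᶜ) → Fin (Nat.card ((H.induce Xᶜ).ConnectedComponent)) :=
    fun y => e ((H.induce Xᶜ).connectedComponentMk y)
  have hcmp : ∀ y y', cmp y = cmp y' ↔ (H.induce Xᶜ).Reachable y y' := by
    intro y y'
    rw [show (cmp y = cmp y') ↔ ((H.induce Xᶜ).connectedComponentMk y
        = (H.induce Xᶜ).connectedComponentMk y') from ⟨fun h => e.injective h, fun h => by
          simp only [cmp, h]⟩]
    exact SimpleGraph.ConnectedComponent.eq
  choose att hatt using fun c => Stmt5Aux.exists_bag_ncl H X cmp D hcmp c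
  apply Nat.sInf_le
  refine ⟨Stmt5Aux.glueDecomp H X ℓ cmp D att hcmp hatt, ?_⟩
  intro n
  calc ((Stmt5Aux.glueDecomp H X ℓ cmp D att hcmp hatt).bag n).ncard
      ≤ (D.bag (Sum.elim id (fun p => p.2.2) n)).ncard := Stmt5Aux.nbag_ncard H X ℓ cmp D n
    _ ≤ treewidth (extGraph H X) + 1 := hD _
end

section
/- Let H, G, F be graphs with F connected, c : G → F and τ : H → F homomorphisms. Let v₁,…,v_k be distinct vertices of F, z₁,…,z_k positive integers, and for each i let d_i = |{u ∈ V(H) : τ(u) = v_i}|. Let G' be the graph obtained from G by cloning, for each i, the colour class c⁻¹(v_i) into z_i copies, with induced colouring c'. Then |Hom_τ(H,G',F,c')| = |Hom_τ(H,G,F,c)| · Π_{i=1}^{k} z_i^{d_i}. -/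
/-- The vertex type of the cloned graph `𝒢(G,F,c,v⃗,z⃗)`: primal vertices (those whose
colour is not among `v₁,…,v_k`) together with, for each `i`, the clones
`c⁻¹(v_i) × [z_i]`. -/
def CloneVert {VG VF : Type*} (c : VG → VF) (k : ℕ) (vs : Fin k → VF)
    (z : Fin k → ℕ) : Type _ :=
  {v : VG // ∀ i, c v ≠ vs i} ⊕ (Σ i : Fin k, {v : VG // c v = vs i} × Fin (z i))

/-- The projection `ρ` sending each vertex of the cloned graph to its underlying
original vertex of `G`. -/
def cloneProj {VG VF : Type*} (c : VG → VF) (k : ℕ) (vs : Fin k → VF)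
    (z : Fin k → ℕ) : CloneVert c k vs z → VG
  | Sum.inl v => ↑v
  | Sum.inr ⟨_, v, _⟩ => ↑v

/-- The cloned graph `𝒢(G,F,c,v⃗,z⃗)`: two vertices are adjacent iff their underlying
original vertices are adjacent in `G`. -/
def cloneGraph {VG VF : Type*} (G : SimpleGraph VG) (c : VG → VF) (k : ℕ)
    (vs : Fin k → VF) (z : Fin k → ℕ) : SimpleGraph (CloneVert c k vs z) where
  Adj a b := G.Adj (cloneProj c k vs z a) (cloneProj c k vs z b)
  symm := ⟨fun _ _ h => SimpleGraph.Adj.symm h⟩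
  loopless := ⟨fun _ h => G.irrefl h⟩

section Aux

variable {VG VF VH : Type*} {c : VG → VF} {k : ℕ} {vs : Fin k → VF} {z : Fin k → ℕ}
  {τ : VH → VF}

/-- Extract the clone index of a vertex whose colour is `vs i`. -/
def idxOf (hvs : Function.Injective vs) :
    ∀ (x : CloneVert c k vs z) (i : Fin k), c (cloneProj c k vs z x) = vs i → Fin (z i)
  | Sum.inl v, i, hx => absurd hx (v.2 i)
  | Sum.inr ⟨_, v, j⟩, _, hx => (hvs (v.2.symm.trans hx)) ▸ j

theorem eq_inr (hvs : Function.Injective vs) (x : CloneVert c k vs z) (i : Fin k)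
    (hx : c (cloneProj c k vs z x) = vs i) :
    x = Sum.inr ⟨i, ⟨cloneProj c k vs z x, hx⟩, idxOf hvs x i hx⟩ := by
  match x with
  | Sum.inl v => exact absurd hx (v.2 i)
  | Sum.inr ⟨i', v, j⟩ =>
    obtain rfl : i' = i := hvs (v.2.symm.trans hx)
    rfl

theorem eq_inl (x : CloneVert c k vs z)
    (hx : ∀ i, c (cloneProj c k vs z x) ≠ vs i) :
    x = Sum.inl ⟨cloneProj c k vs z x, hx⟩ := by
  match x with
  | Sum.inl v => rfl
  | Sum.inr ⟨i, v, j⟩ => exact absurd v.2 (hx i)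

/-- Lift a function `VH → VG` compatible with the colourings to the cloned graph,
using clone indices prescribed by `f`. -/
noncomputable def liftFun (h : VH → VG) (hc : ∀ u, c (h u) = τ u)
    (f : ∀ i, {u : VH // τ u = vs i} → Fin (z i)) (u : VH) : CloneVert c k vs z :=
  @dite _ (∃ i, τ u = vs i) (Classical.dec _)
    (fun hu => Sum.inr
      ⟨hu.choose, ⟨h u, (hc u).trans hu.choose_spec⟩, f hu.choose ⟨u, hu.choose_spec⟩⟩)
    (fun hu => Sum.inl ⟨h u, fun i hi => hu ⟨i, (hc u).symm.trans hi⟩⟩)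

theorem proj_liftFun (h : VH → VG) (hc : ∀ u, c (h u) = τ u)
    (f : ∀ i, {u : VH // τ u = vs i} → Fin (z i)) (u : VH) :
    cloneProj c k vs z (liftFun h hc f u) = h u := by
  unfold liftFun
  by_cases hu : ∃ i, τ u = vs i
  · exact (congrArg (cloneProj c k vs z) (dite_cond_eq_true (eq_true hu))).trans rfl
  · exact (congrArg (cloneProj c k vs z) (dite_cond_eq_false (eq_false hu))).trans rfl

theorem liftFun_pos (h : VH → VG) (hc : ∀ u, c (h u) = τ u)
    (f : ∀ i, {u : VH // τ u = vs i} → Fin (z i)) (u : VH) (hu : ∃ i, τ u = vs i) :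
    liftFun h hc f u = Sum.inr
      ⟨hu.choose, ⟨h u, (hc u).trans hu.choose_spec⟩, f hu.choose ⟨u, hu.choose_spec⟩⟩ := by
  unfold liftFun
  exact dite_cond_eq_true (eq_true hu)

theorem liftFun_neg (h : VH → VG) (hc : ∀ u, c (h u) = τ u)
    (f : ∀ i, {u : VH // τ u = vs i} → Fin (z i)) (u : VH) (hu : ¬ ∃ i, τ u = vs i) :
    liftFun h hc f u = Sum.inl ⟨h u, fun i hi => hu ⟨i, (hc u).symm.trans hi⟩⟩ := by
  unfold liftFun
  exact dite_cond_eq_false (eq_false hu)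

theorem idxOf_liftFun (hvs : Function.Injective vs) (h : VH → VG)
    (hc : ∀ u, c (h u) = τ u) (f : ∀ i, {u : VH // τ u = vs i} → Fin (z i))
    (u : VH) (i : Fin k) (hui : τ u = vs i)
    (hx : c (cloneProj c k vs z (liftFun h hc f u)) = vs i) :
    idxOf hvs (liftFun h hc f u) i hx = f i ⟨u, hui⟩ := by
  have hu : ∃ j, τ u = vs j := ⟨i, hui⟩
  have hi : hu.choose = i := hvs (hu.choose_spec.symm.trans hui)
  subst hi
  revert hx
  rw [liftFun_pos h hc f u hu]
  intro hx
  rfl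

end Aux

/-- Cloning colour classes multiplies the number of `τ`-restricted
homomorphisms: `|Hom_τ(H,G',F,c')| = |Hom_τ(H,G,F,c)| · Π_i z_i ^ d_i`, where
`d_i = |{u ∈ V(H) : τ(u) = v_i}|` and `c' = c ∘ ρ`. -/
theorem stmt9 {VH VG VF : Type*} [Finite VH] [Finite VG] [Finite VF]
    (H : SimpleGraph VH) (G : SimpleGraph VG) (F : SimpleGraph VF)
    (hF : F.Connected) (c : G →g F) (τ : H →g F)
    (k : ℕ) (vs : Fin k → VF) (hvs : Function.Injective vs)
    (z : Fin k → ℕ) (hz : ∀ i, 0 < z i) :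
    Nat.card {h : H →g cloneGraph G (⇑c) k vs z //
        ∀ u, c (cloneProj (⇑c) k vs z (h u)) = τ u} =
      Nat.card {h : H →g G // ∀ u, c (h u) = τ u} *
        ∏ i : Fin k, z i ^ Nat.card {u : VH // τ u = vs i} := by
  classical
  have e : {h : H →g cloneGraph G (⇑c) k vs z //
      ∀ u, c (cloneProj (⇑c) k vs z (h u)) = τ u} ≃
      ({h : H →g G // ∀ u, c (h u) = τ u} ×
        ∀ i : Fin k, {u : VH // τ u = vs i} → Fin (z i)) :=
    { toFun := fun h' =>
        (⟨⟨fun u => cloneProj (⇑c) k vs z (h'.1 u), fun a => h'.1.map_rel' a⟩,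
          fun u => h'.2 u⟩,
         fun i u => idxOf hvs (h'.1 u.1) i ((h'.2 u.1).trans u.2)),
      invFun := fun p =>
        ⟨⟨liftFun (⇑p.1.1) p.1.2 p.2, by
            intro a b hab
            show G.Adj _ _
            rw [proj_liftFun, proj_liftFun]
            exact p.1.1.map_rel' hab⟩,
          fun u => by
            show c (cloneProj (⇑c) k vs z (liftFun (⇑p.1.1) p.1.2 p.2 u)) = τ u
            rw [proj_liftFun]
            exact p.1.2 u⟩,
      left_inv := by
        rintro ⟨h', hh'⟩
        apply Subtype.ext
        ext u
        show liftFun (fun v => cloneProj (⇑c) k vs z (h' v)) (fun v => hh' v)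
            (fun i w => idxOf hvs (h' w.1) i ((hh' w.1).trans w.2)) u = h' u
        by_cases hu : ∃ i, τ u = vs i
        · rw [liftFun_pos _ _ _ u hu]
          exact (eq_inr hvs (h' u) hu.choose ((hh' u).trans hu.choose_spec)).symm
        · rw [liftFun_neg _ _ _ u hu]
          exact (eq_inl (h' u) fun i hi => hu ⟨i, (hh' u).symm.trans hi⟩).symm
      right_inv := by
        rintro ⟨⟨h, hc⟩, f⟩
        refine Prod.ext ?_ ?_
        · apply Subtype.ext
          ext u
          exact proj_liftFun (⇑h) hc f u
        · funext i u
          obtain ⟨u, hu2⟩ := u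
          exact idxOf_liftFun hvs (⇑h) hc f u i hu2 _ }
  rw [Nat.card_congr e, Nat.card_prod, Nat.card_pi]
  congr 1
  refine Finset.prod_congr rfl fun i _ => ?_
  rw [Nat.card_fun, Nat.card_eq_fintype_card (α := Fin (z i)), Fintype.card_fin]
end

section
/- Let (H,X) be a counting minimal conjunctive query, G a graph, and c an H-colouring of G. Then the set of colour-prescribed answers cpAns((H,X),(G,c)) equals Ans^id((H,X),(G,c)), the set of answers a with c(a(x)) = x for all x ∈ X. -/
/-- For a counting minimal conjunctive query `(H,X)` (formalised via
the relevant property: every homomorphism from `H` to itself that maps `X` surjectively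
onto `X` is (the underlying map of) an automorphism of `H`), a graph `G` and an
`H`-colouring `c` of `G`, the set of colour-prescribed answers `cpAns((H,X),(G,c))`
equals `Ans^id((H,X),(G,c))`. -/
theorem stmt12 {V W : Type*} [Finite V] [Finite W]
    (H : SimpleGraph V) (X : Set V) (G : SimpleGraph W) (c : G →g H)
    (hmin : ∀ h : H →g H, Set.MapsTo ⇑h X X → Set.SurjOn ⇑h X X →
      ∃ g : H ≃g H, ∀ v, g v = h v) :
    {a : ↥X → W | ∃ h : H →g G, (∀ v, c (h v) = v) ∧ ∀ x : ↥X, h ↑x = a x} =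
    {a : ↥X → W | (∃ h : H →g G, ∀ x : ↥X, h ↑x = a x) ∧
      ∀ x : ↥X, c (a x) = ↑x} := by
  ext a
  simp only [Set.mem_setOf_eq]
  constructor
  · rintro ⟨h, hc, hx⟩
    exact ⟨⟨h, hx⟩, fun x => by rw [← hx x, hc]⟩
  · rintro ⟨⟨h, hx⟩, hca⟩
    -- f = c ∘ h fixes X pointwise
    set f : H →g H := c.comp h with hf
    have hfix : ∀ x : ↥X, f ↑x = ↑x := fun x => by
      show c (h ↑x) = ↑x
      rw [hx x, hca x]
    have hmaps : Set.MapsTo ⇑f X X := fun x hxm => by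
      have := hfix ⟨x, hxm⟩; simp only [this]; exact hxm
    have hsurj : Set.SurjOn ⇑f X X := fun x hxm => ⟨x, hxm, hfix ⟨x, hxm⟩⟩
    obtain ⟨g, hg⟩ := hmin f hmaps hsurj
    have hgfix : ∀ x : ↥X, g.symm ↑x = ↑x := fun x => by
      have : g ↑x = ↑x := by rw [hg]; exact hfix x
      have := congrArg g.symm this
      simpa using this.symm
    refine ⟨h.comp g.symm.toEmbedding.toHom, fun v => ?_, fun x => ?_⟩
    · show c (h (g.symm v)) = v
      have : c (h (g.symm v)) = f (g.symm v) := rfl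
      rw [this, ← hg (g.symm v)]
      simp
    · show h (g.symm ↑x) = a x
      rw [hgfix x, hx x]
end

section
/- Let A be a class of graph-structures where for a counting minimal connected conjunctive query (H,X) with at least one free variable, counting answers to (H,X) is invariant under k-WL equivalence where k = tw(Γ(H',X')) for the counting minimal representative: specifically, if two graphs G and G' satisfy |Hom(T,G)| = |Hom(T,G')| for every graph T of treewidth at most the extension width etw(H,X), then |Ans((H,X),G)| = |Ans((H,X),G')|. -/
/-- The set of answers of the conjunctive query `(H,X)` in a graph `G`: maps
`a : X → V(G)` that extend to a graph homomorphism from `H` to `G`. -/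
def Answers {V W : Type*} (H : SimpleGraph V) (X : Set V) (G : SimpleGraph W) :
    Set (↥X → W) :=
  {a | ∃ h : H →g G, ∀ x : ↥X, h ↑x = a x}


open SimpleGraph

namespace Stmt19Aux

variable {ι : Type*} {T : SimpleGraph ι}

lemma reachable_side {A : Type*} {G : SimpleGraph A} (σ : A → Bool)
    (h : ∀ u v, G.Adj u v → σ u = σ v) {u v : A} (hr : G.Reachable u v) : σ u = σ v := by
  obtain ⟨p⟩ := hr
  induction p with
  | nil => rfl
  | cons ha _ ih => exact (h _ _ ha).trans ih

lemma reachable_induce_of_walk {S : Set ι} :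
    ∀ {u v : ι} (p : T.Walk u v) (hp : ∀ z ∈ p.support, z ∈ S),
    (T.induce S).Reachable ⟨u, hp u p.start_mem_support⟩ ⟨v, hp v p.end_mem_support⟩ := by
  intro u v p
  induction p with
  | nil => intro hp; rfl
  | @cons a b c ha p ih =>
    intro hp
    have hb : b ∈ S := hp b (by simp)
    have ha' : (T.induce S).Adj ⟨a, hp a (by simp)⟩ ⟨b, hb⟩ := ha
    exact ha'.reachable.trans (ih (fun z hz => hp z (by simp [hz])))

lemma exists_path_subset {S : Set ι} (hS : (T.induce S).Connected) {u v : ι}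
    (hu : u ∈ S) (hv : v ∈ S) :
    ∃ p : T.Walk u v, p.IsPath ∧ ∀ z ∈ p.support, z ∈ S := by
  classical
  obtain ⟨q⟩ := hS ⟨u, hu⟩ ⟨v, hv⟩
  let q' := q.map (SimpleGraph.Embedding.induce S).toHom
  have hsupp : ∀ z ∈ q'.support, z ∈ S := by
    intro z hz
    rw [Walk.support_map] at hz
    obtain ⟨a, _, rfl⟩ := List.mem_map.mp hz
    exact a.2
  exact ⟨q'.bypass, q'.bypass_isPath,
    fun z hz => hsupp z (q'.support_bypass_subset hz)⟩

/-- the unique tree path between two vertices of a connected induced subgraph stays inside -/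
lemma tree_path_subset (hT : T.IsTree) {S : Set ι} (hS : (T.induce S).Connected)
    {u v : ι} (hu : u ∈ S) (hv : v ∈ S) {p : T.Walk u v} (hp : p.IsPath) :
    ∀ z ∈ p.support, z ∈ S := by
  obtain ⟨q, hq, hqS⟩ := exists_path_subset hS hu hv
  obtain ⟨r, -, hr⟩ := hT.existsUnique_path u v
  rw [hr p hp, ← hr q hq]
  exact hqS

/-- the intersection of two connected induced subgraphs of a tree is connected -/
lemma induce_inter_connected (hT : T.IsTree) {A B : Set ι}
    (hA : (T.induce A).Connected) (hB : (T.induce B).Connected)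
    (hAB : (A ∩ B).Nonempty) : (T.induce (A ∩ B)).Connected := by
  obtain ⟨w, hw⟩ := hAB
  rw [connected_iff]
  refine ⟨?_, ⟨⟨w, hw⟩⟩⟩
  rintro ⟨u, hu⟩ ⟨v, hv⟩
  obtain ⟨p, hp, hpA⟩ := exists_path_subset hA hu.1 hv.1
  have hpB := tree_path_subset hT hB hu.2 hv.2 hp
  have hres := reachable_induce_of_walk (S := A ∩ B) p
    (fun z hz => Set.mem_inter (hpA z hz) (hpB z hz))
  exact hres

variable {A : Type*} {G : SimpleGraph A}

lemma exists_firstMeet {S : Set A} :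
    ∀ {u v : A} (p : G.Walk u v), p.IsPath → v ∈ S →
    ∃ (m : A) (q : G.Walk u m), m ∈ S ∧ q.IsPath ∧
      (∀ z ∈ q.support, z ∈ p.support) ∧
      (∀ z ∈ q.support, z ∈ S → z = m) := by
  intro u v p
  induction p with
  | nil =>
    intro _ hv
    exact ⟨_, Walk.nil, hv, Walk.IsPath.nil, by simp, by intro z hz _; simpa using hz⟩
  | @cons a b c ha p ih =>
    intro hp hv
    by_cases haS : a ∈ S
    · exact ⟨a, Walk.nil, haS, Walk.IsPath.nil, by simp, by intro z hz _; simpa using hz⟩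
    · obtain ⟨m, q', hm, hq', hsub, hlast⟩ := ih hp.of_cons hv
      refine ⟨m, Walk.cons ha q', hm, ?_, ?_, ?_⟩
      · rw [Walk.cons_isPath_iff]
        refine ⟨hq', fun haq => ?_⟩
        have : a ∈ p.support := hsub a haq
        exact ((Walk.cons_isPath_iff ha p).mp hp).2 this
      · intro z hz
        rw [Walk.support_cons, List.mem_cons] at hz
        rw [Walk.support_cons, List.mem_cons]
        rcases hz with rfl | hz
        · exact Or.inl rfl
        · exact Or.inr (hsub z hz)
      · intro z hz hzS
        rw [Walk.support_cons, List.mem_cons] at hz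
        rcases hz with rfl | hz
        · exact absurd hzS haS
        · exact hlast z hz hzS

lemma median {a b c : A} (P : G.Walk a c) (Q : G.Walk a b)
    (hP : P.IsPath) (hQ : Q.IsPath) :
    ∃ (m : A) (R : G.Walk c b), R.IsPath ∧ m ∈ R.support ∧ m ∈ P.support ∧ m ∈ Q.support := by
  classical
  obtain ⟨m, q, hm, hq, hsub, hlast⟩ :=
    exists_firstMeet (S := {z | z ∈ Q.support}) P.reverse hP.reverse Q.start_mem_support
  have hqP : ∀ z ∈ q.support, z ∈ P.support := by
    intro z hz
    have := hsub z hz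
    rwa [Walk.support_reverse, List.mem_reverse] at this
  set Q₂ := Q.dropUntil m hm with hQ₂
  have hQ₂path : Q₂.IsPath := hQ.dropUntil hm
  refine ⟨m, q.append Q₂, ?_, ?_, hqP m q.end_mem_support, hm⟩
  · rw [Walk.isPath_def, Walk.support_append]
    rw [List.nodup_append]
    refine ⟨hq.support_nodup, hQ₂path.support_nodup.tail, ?_⟩
    intro z hzq z' hztail hzz'
    subst hzz'
    have hzQ : z ∈ Q.support := Walk.support_dropUntil_subset Q hm (List.mem_of_mem_tail hztail)
    have hzm : z = m := hlast z hzq hzQ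
    subst hzm
    have hnd := hQ₂path.support_nodup
    rw [Walk.support_eq_cons] at hnd
    exact (List.nodup_cons.mp hnd).1 hztail
  · rw [Walk.mem_support_append_iff]
    exact Or.inl q.end_mem_support


section Helly
variable {ι : Type*} {T : SimpleGraph ι}

lemma helly3 (hT : T.IsTree) {A B C : Set ι}
    (hA : (T.induce A).Connected) (hB : (T.induce B).Connected) (hC : (T.induce C).Connected)
    (hAB : (A ∩ B).Nonempty) (hAC : (A ∩ C).Nonempty) (hBC : (B ∩ C).Nonempty) :
    (A ∩ B ∩ C).Nonempty := by
  obtain ⟨xAB, hxAB⟩ := hAB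
  obtain ⟨xAC, hxAC⟩ := hAC
  obtain ⟨xBC, hxBC⟩ := hBC
  obtain ⟨P, hP, hPA⟩ := exists_path_subset hA hxAB.1 hxAC.1
  obtain ⟨Q, hQ, hQB⟩ := exists_path_subset hB hxAB.2 hxBC.1
  obtain ⟨m, R, hR, hmR, hmP, hmQ⟩ := median P Q hP hQ
  have hRC := tree_path_subset hT hC hxAC.2 hxBC.2 hR
  exact ⟨m, ⟨⟨hPA m hmP, hQB m hmQ⟩, hRC m hmR⟩⟩

lemma helly_family (hT : T.IsTree) {J : Type*} [DecidableEq J] (F : Finset J) :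
    ∀ (S : J → Set ι),
    (∀ j ∈ F, (T.induce (S j)).Connected) →
    (∀ j ∈ F, ∀ k ∈ F, (S j ∩ S k).Nonempty) →
    F.Nonempty → ∃ t, ∀ j ∈ F, t ∈ S j := by
  induction F using Finset.induction_on with
  | empty => intro _ _ _ h; exact absurd h (by simp)
  | @insert a F ha ih =>
    intro S hconn hpair _
    rcases F.eq_empty_or_nonempty with rfl | hFne
    · obtain ⟨⟨t, ht⟩⟩ := (hconn a (by simp)).nonempty
      refine ⟨t, ?_⟩
      intro j hj
      rw [Finset.mem_insert] at hj
      rcases hj with rfl | hj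
      · exact ht
      · simp at hj
    · obtain ⟨t, ht⟩ := ih (fun j => S j ∩ S a)
        (fun j hj => induce_inter_connected hT (hconn j (by simp [hj])) (hconn a (by simp))
          (hpair j (by simp [hj]) a (by simp)))
        (fun j hj k hk => by
          obtain ⟨t, ⟨⟨h1, h2⟩, h3⟩⟩ := helly3 hT (hconn j (by simp [hj])) (hconn k (by simp [hk]))
            (hconn a (by simp))
            (hpair j (by simp [hj]) k (by simp [hk]))
            (hpair j (by simp [hj]) a (by simp))
            (hpair k (by simp [hk]) a (by simp))
          exact ⟨t, ⟨h1, h3⟩, ⟨h2, h3⟩⟩)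
        hFne
      refine ⟨t, ?_⟩
      intro j hj
      rw [Finset.mem_insert] at hj
      rcases hj with rfl | hj
      · obtain ⟨k, hk⟩ := hFne
        exact (ht k hk).2
      · exact (ht j hj).1

lemma clique_in_bag {V' : Type*} {G : SimpleGraph V'} (D : TreeDecomp G)
    (K : Finset V') [DecidableEq V']
    (hK : ∀ x ∈ K, ∀ y ∈ K, x ≠ y → G.Adj x y) (hKne : K.Nonempty) :
    ∃ t, ∀ x ∈ K, x ∈ D.bag t := by
  have := helly_family D.tree K (fun x => {t | x ∈ D.bag t})
    (fun x _ => D.bags_connected x)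
    (fun x hx y hy => by
      rcases eq_or_ne x y with rfl | hxy
      · obtain ⟨t, ht⟩ := D.covers_vertex x
        exact ⟨t, ht, ht⟩
      · obtain ⟨t, ht1, ht2⟩ := D.covers_edge (hK x hx y hy hxy)
        exact ⟨t, ht1, ht2⟩)
    hKne
  exact this

end Helly


section Side
variable {ι : Type*} {T : SimpleGraph ι}

lemma tree_side (hT : T.IsTree) {t t' : ι} (h : T.Adj t t') :
    ∃ σ : ι → Bool, σ t = true ∧ σ t' = false ∧
      ∀ s s', T.Adj s s' → s(s, s') ≠ s(t, t') → σ s = σ s' := by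
  classical
  refine ⟨fun s => decide ((T \ fromEdgeSet {s(t, t')}).Reachable s t), ?_, ?_, ?_⟩
  · simp [Reachable.refl]
  · have hb : T.IsBridge s(t, t') :=
      (isAcyclic_iff_forall_adj_isBridge.mp hT.IsAcyclic) h
    have : ¬(T \ fromEdgeSet {s(t, t')}).Reachable t t' := (isBridge_iff.mp hb)
    simp only [decide_eq_false_iff_not]
    intro hr
    exact this hr.symm
  · intro s s' hadj hne
    have hadj' : (T \ fromEdgeSet {s(t, t')}).Adj s s' := by
      rw [sdiff_adj]
      refine ⟨hadj, ?_⟩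
      rw [fromEdgeSet_adj]
      rintro ⟨hmem, -⟩
      exact hne (by simpa using hmem)
    rw [decide_eq_decide]
    exact ⟨fun hr => hadj'.symm.reachable.trans hr, fun hr => hadj'.reachable.trans hr⟩

end Side

section StarGlue

variable {ι J : Type*} (T : SimpleGraph ι) (att : J → ι)

/-- relation generating the star gluing of copies of `T` onto `T` -/
def sgRel : ι ⊕ (J × ι) → ι ⊕ (J × ι) → Prop := fun u v =>
  match u, v with
  | Sum.inl t, Sum.inl t' => T.Adj t t'
  | Sum.inl t, Sum.inr (j, t') => t = att j ∧ t' = att j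
  | Sum.inr (j, t), Sum.inr (j', t') => j = j' ∧ T.Adj t t'
  | _, _ => False

/-- the star gluing: a copy of `T` together with, for each `j : J`, another copy of `T`
attached by an edge at `att j`. -/
def starGlue : SimpleGraph (ι ⊕ (J × ι)) := SimpleGraph.fromRel (sgRel T att)

lemma starGlue_adj_inl_inl {t t'} :
    (starGlue T att).Adj (Sum.inl t) (Sum.inl t') ↔ T.Adj t t' := by
  simp only [starGlue, fromRel_adj, sgRel, ne_eq, Sum.inl.injEq]
  constructor
  · rintro ⟨hne, h | h⟩
    · exact h
    · exact h.symm
  · intro h; exact ⟨h.ne, Or.inl h⟩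

lemma starGlue_adj_inr_inr {j j' t t'} :
    (starGlue T att).Adj (Sum.inr (j, t)) (Sum.inr (j', t')) ↔ j = j' ∧ T.Adj t t' := by
  simp only [starGlue, fromRel_adj, sgRel, ne_eq, Sum.inr.injEq, Prod.mk.injEq]
  constructor
  · rintro ⟨hne, ⟨rfl, h⟩ | ⟨rfl, h⟩⟩
    · exact ⟨rfl, h⟩
    · exact ⟨rfl, h.symm⟩
  · rintro ⟨rfl, h⟩
    exact ⟨by simp [h.ne], Or.inl ⟨rfl, h⟩⟩

lemma starGlue_adj_inl_inr {t j t'} :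
    (starGlue T att).Adj (Sum.inl t) (Sum.inr (j, t')) ↔ t = att j ∧ t' = att j := by
  simp only [starGlue, fromRel_adj, sgRel, ne_eq]
  constructor
  · rintro ⟨hne, h | h⟩
    · exact h
    · exact h.elim
  · rintro ⟨rfl, rfl⟩
    exact ⟨by simp, Or.inl ⟨rfl, rfl⟩⟩

lemma starGlue_adj_inr_inl {t j t'} :
    (starGlue T att).Adj (Sum.inr (j, t')) (Sum.inl t) ↔ t = att j ∧ t' = att j := by
  rw [adj_comm, starGlue_adj_inl_inr]

/-- the inclusion of the base copy -/
def sgInl : T →g starGlue T att where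
  toFun := Sum.inl
  map_rel' := fun h => (starGlue_adj_inl_inl T att).mpr h

/-- the inclusion of the `j`-th attached copy -/
def sgInr (j : J) : T →g starGlue T att where
  toFun := fun t => Sum.inr (j, t)
  map_rel' := fun h => (starGlue_adj_inr_inr T att).mpr ⟨rfl, h⟩

lemma starGlue_connected (hT : T.Connected) : (starGlue T att).Connected := by
  have hne : Nonempty ι := hT.nonempty
  rw [connected_iff]
  refine ⟨?_, by infer_instance⟩
  have hbase : ∀ x : ι ⊕ (J × ι), (starGlue T att).Reachable x (Sum.inl (Classical.arbitrary ι)) := by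
    intro x
    match x with
    | Sum.inl t => exact Reachable.map (sgInl T att) (hT.preconnected t _)
    | Sum.inr (j, t) =>
      refine Reachable.trans (Reachable.map (sgInr T att j) (hT.preconnected t (att j))) ?_
      refine Reachable.trans (Adj.reachable ?_) (Reachable.map (sgInl T att) (hT.preconnected (att j) _))
      exact (starGlue_adj_inr_inl T att).mpr ⟨rfl, rfl⟩
  intro x y
  exact (hbase x).trans (hbase y).symm

lemma sym2_inl_eq_iff {a b c d : ι} :
    (s(Sum.inl a, Sum.inl b) : Sym2 (ι ⊕ (J × ι))) = s(Sum.inl c, Sum.inl d) ↔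
      s(a, b) = s(c, d) := by
  simp only [Sym2.eq_iff, Sum.inl.injEq]

lemma sym2_inr_eq_iff {a b c d : J × ι} :
    (s(Sum.inr a, Sum.inr b) : Sym2 (ι ⊕ (J × ι))) = s(Sum.inr c, Sum.inr d) ↔
      s(a, b) = s(c, d) := by
  simp only [Sym2.eq_iff, Sum.inr.injEq]

lemma starGlue_isTree (hT : T.IsTree) : (starGlue T att).IsTree := by
  classical
  refine ⟨starGlue_connected T att hT.isConnected, ?_⟩
  rw [isAcyclic_iff_forall_adj_isBridge]
  intro v w hadj
  rw [isBridge_iff]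
  intro hreach
  set e : Sym2 (ι ⊕ (J × ι)) := s(v, w) with he
  have hsurv : ∀ u₁ u₂, ((starGlue T att) \ fromEdgeSet {e}).Adj u₁ u₂ →
      (starGlue T att).Adj u₁ u₂ ∧ s(u₁, u₂) ≠ e := by
    intro u₁ u₂ h
    rw [sdiff_adj, fromEdgeSet_adj] at h
    refine ⟨h.1, fun hc => h.2 ⟨by simp [hc], h.1.ne⟩⟩
  match v, w with
  | Sum.inl t, Sum.inl t' =>
    have htt' : T.Adj t t' := (starGlue_adj_inl_inl T att).mp hadj
    obtain ⟨σT, hσ1, hσ2, hσ3⟩ := tree_side hT htt'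
    have hpres : ∀ u₁ u₂, ((starGlue T att) \ fromEdgeSet {e}).Adj u₁ u₂ →
        (Sum.elim σT (fun p => σT (att p.1))) u₁ = (Sum.elim σT (fun p => σT (att p.1))) u₂ := by
      intro u₁ u₂ h
      obtain ⟨hadj₁, hne₁⟩ := hsurv u₁ u₂ h
      match u₁, u₂ with
      | Sum.inl s, Sum.inl s' =>
        have hs : T.Adj s s' := (starGlue_adj_inl_inl T att).mp hadj₁
        refine hσ3 s s' hs ?_
        intro hc
        exact hne₁ (by rw [he]; exact sym2_inl_eq_iff.mpr hc)
      | Sum.inl s, Sum.inr p =>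
        obtain ⟨rfl, -⟩ := (starGlue_adj_inl_inr T att).mp hadj₁
        simp
      | Sum.inr p, Sum.inl s =>
        obtain ⟨rfl, -⟩ := (starGlue_adj_inr_inl T att).mp hadj₁
        simp
      | Sum.inr p, Sum.inr p' =>
        obtain ⟨h1, -⟩ := (starGlue_adj_inr_inr T att).mp hadj₁
        simp [h1]
    have hfin := reachable_side _ hpres hreach
    simp only [Sum.elim_inl] at hfin
    rw [hσ1, hσ2] at hfin
    exact absurd hfin (by simp)
  | Sum.inl t, Sum.inr ⟨j₀, s₀⟩ =>
    obtain ⟨ht, ht'⟩ := (starGlue_adj_inl_inr T att).mp hadj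
    subst ht; subst ht'
    have hpres : ∀ u₁ u₂, ((starGlue T att) \ fromEdgeSet {e}).Adj u₁ u₂ →
        (Sum.elim (fun _ => false) (fun p : J × ι => decide (p.1 = j₀))) u₁ =
        (Sum.elim (fun _ => false) (fun p : J × ι => decide (p.1 = j₀))) u₂ := by
      intro u₁ u₂ h
      obtain ⟨hadj₁, hne₁⟩ := hsurv u₁ u₂ h
      match u₁, u₂ with
      | Sum.inl s, Sum.inl s' => simp
      | Sum.inl s, Sum.inr ⟨j, sj⟩ =>
        obtain ⟨hs1, hs2⟩ := (starGlue_adj_inl_inr T att).mp hadj₁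
        subst hs1; subst hs2
        have hjne : j ≠ j₀ := by
          intro hc
          subst hc
          exact hne₁ (by rw [he])
        simp [hjne]
      | Sum.inr ⟨j, sj⟩, Sum.inl s =>
        obtain ⟨hs1, hs2⟩ := (starGlue_adj_inr_inl T att).mp hadj₁
        subst hs1; subst hs2
        have hjne : j ≠ j₀ := by
          intro hc
          subst hc
          exact hne₁ (by rw [he, Sym2.eq_swap])
        simp [hjne]
      | Sum.inr p, Sum.inr p' =>
        obtain ⟨h1, -⟩ := (starGlue_adj_inr_inr T att).mp hadj₁
        simp [h1]
    have hfin := reachable_side _ hpres hreach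
    simp at hfin
  | Sum.inr ⟨j₀, s₀⟩, Sum.inl t =>
    obtain ⟨ht, ht'⟩ := (starGlue_adj_inr_inl T att).mp hadj
    subst ht; subst ht'
    have hpres : ∀ u₁ u₂, ((starGlue T att) \ fromEdgeSet {e}).Adj u₁ u₂ →
        (Sum.elim (fun _ => false) (fun p : J × ι => decide (p.1 = j₀))) u₁ =
        (Sum.elim (fun _ => false) (fun p : J × ι => decide (p.1 = j₀))) u₂ := by
      intro u₁ u₂ h
      obtain ⟨hadj₁, hne₁⟩ := hsurv u₁ u₂ h
      match u₁, u₂ with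
      | Sum.inl s, Sum.inl s' => simp
      | Sum.inl s, Sum.inr ⟨j, sj⟩ =>
        obtain ⟨hs1, hs2⟩ := (starGlue_adj_inl_inr T att).mp hadj₁
        subst hs1; subst hs2
        have hjne : j ≠ j₀ := by
          intro hc
          subst hc
          exact hne₁ (by rw [he, Sym2.eq_swap])
        simp [hjne]
      | Sum.inr ⟨j, sj⟩, Sum.inl s =>
        obtain ⟨hs1, hs2⟩ := (starGlue_adj_inr_inl T att).mp hadj₁
        subst hs1; subst hs2
        have hjne : j ≠ j₀ := by
          intro hc
          subst hc
          exact hne₁ (by rw [he])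
        simp [hjne]
      | Sum.inr p, Sum.inr p' =>
        obtain ⟨h1, -⟩ := (starGlue_adj_inr_inr T att).mp hadj₁
        simp [h1]
    have hfin := reachable_side _ hpres hreach
    simp at hfin
  | Sum.inr ⟨j₀, t⟩, Sum.inr ⟨j₁, t'⟩ =>
    obtain ⟨hj, htt'⟩ := (starGlue_adj_inr_inr T att).mp hadj
    subst hj
    obtain ⟨σT, hσ1, hσ2, hσ3⟩ := tree_side hT htt'
    have hpres : ∀ u₁ u₂, ((starGlue T att) \ fromEdgeSet {e}).Adj u₁ u₂ →
        (Sum.elim (fun _ => σT (att j₀))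
          (fun p : J × ι => if p.1 = j₀ then σT p.2 else σT (att j₀))) u₁ =
        (Sum.elim (fun _ => σT (att j₀))
          (fun p : J × ι => if p.1 = j₀ then σT p.2 else σT (att j₀))) u₂ := by
      intro u₁ u₂ h
      obtain ⟨hadj₁, hne₁⟩ := hsurv u₁ u₂ h
      match u₁, u₂ with
      | Sum.inl s, Sum.inl s' => simp
      | Sum.inl s, Sum.inr ⟨j, sj⟩ =>
        obtain ⟨hs1, hs2⟩ := (starGlue_adj_inl_inr T att).mp hadj₁
        subst hs1; subst hs2
        by_cases hc : j = j₀ <;> simp [hc]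
      | Sum.inr ⟨j, sj⟩, Sum.inl s =>
        obtain ⟨hs1, hs2⟩ := (starGlue_adj_inr_inl T att).mp hadj₁
        subst hs1; subst hs2
        by_cases hc : j = j₀ <;> simp [hc]
      | Sum.inr ⟨j, sj⟩, Sum.inr ⟨j', sj'⟩ =>
        obtain ⟨h1, hTs⟩ := (starGlue_adj_inr_inr T att).mp hadj₁
        subst h1
        by_cases hc : j = j₀
        · subst hc
          simp only [Sum.elim_inr, if_pos rfl]
          refine hσ3 _ _ hTs ?_
          intro hcon
          refine hne₁ ?_
          rw [he, sym2_inr_eq_iff]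
          rw [Sym2.eq_iff] at hcon ⊢
          rcases hcon with ⟨h1', h2'⟩ | ⟨h1', h2'⟩
          · exact Or.inl (by simp [h1', h2'])
          · exact Or.inr (by simp [h1', h2'])
        · simp [hc]
    have hfin := reachable_side _ hpres hreach
    simp only [Sum.elim_inr, if_pos rfl] at hfin
    rw [hσ1, hσ2] at hfin
    exact absurd hfin (by simp)

end StarGlue

section Transfer

lemma twAtMost_of_iso {V₁ V₂ : Type*} {G₁ : SimpleGraph V₁} {G₂ : SimpleGraph V₂}
    (e : G₁ ≃g G₂) {k : ℕ} (h : TreewidthAtMost G₁ k) : TreewidthAtMost G₂ k := by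
  obtain ⟨D, hD⟩ := h
  have himg : ∀ (s : Set V₁) (v : V₂), v ∈ (⇑e) '' s ↔ e.symm v ∈ s := by
    intro s v
    constructor
    · rintro ⟨x, hx, rfl⟩
      simpa using hx
    · intro hx
      exact ⟨e.symm v, hx, by simp⟩
  refine ⟨⟨D.ι, D.T, D.tree, fun t => (⇑e) '' D.bag t, ?_, ?_, ?_⟩, ?_⟩
  · intro v
    obtain ⟨t, ht⟩ := D.covers_vertex (e.symm v)
    exact ⟨t, (himg _ _).mpr ht⟩
  · intro u v huv
    have huv' : G₁.Adj (e.symm u) (e.symm v) := e.symm.map_rel_iff.mpr huv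
    obtain ⟨t, h1, h2⟩ := D.covers_edge huv'
    exact ⟨t, (himg _ _).mpr h1, (himg _ _).mpr h2⟩
  · intro v
    have hset : {t | v ∈ (⇑e) '' D.bag t} = {t | e.symm v ∈ D.bag t} := by
      ext t; exact himg _ _
    rw [hset]
    exact D.bags_connected _
  · intro t
    rw [Set.ncard_image_of_injective _ (RelIso.injective e)]
    exact hD t

lemma twAtMost_trivial {V : Type*} [Fintype V] (G : SimpleGraph V) :
    TreewidthAtMost G (Fintype.card V) := by
  have htree : (⊥ : SimpleGraph PUnit).IsTree := by
    constructor
    · rw [connected_iff]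
      exact ⟨fun a b => by cases a; cases b; exact Reachable.refl _, ⟨PUnit.unit⟩⟩
    · exact isAcyclic_bot
  refine ⟨⟨PUnit, ⊥, htree, fun _ => Set.univ,
    fun v => ⟨PUnit.unit, trivial⟩, fun u v _ => ⟨PUnit.unit, trivial, trivial⟩, ?_⟩, ?_⟩
  · intro v
    rw [connected_iff]
    refine ⟨fun a b => ?_, ⟨⟨PUnit.unit, trivial⟩⟩⟩
    have : a = b := Subsingleton.elim a b
    rw [this]
  · intro t
    rw [Set.ncard_univ, Nat.card_eq_fintype_card]
    omega

end Transfer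

section Glue

variable {V : Type*} (H : SimpleGraph V) (X : Set V)

/-- `ℓ` disjoint copies of `H` glued along the common set `X` of free variables. -/
def glue (ℓ : ℕ) : SimpleGraph (↥X ⊕ (Fin ℓ × ↥(Xᶜ))) := SimpleGraph.fromRel (fun u v =>
  match u, v with
  | Sum.inl x, Sum.inl y => H.Adj ↑x ↑y
  | Sum.inl x, Sum.inr p => H.Adj ↑x ↑p.2
  | Sum.inr p, Sum.inr q => p.1 = q.1 ∧ H.Adj ↑p.2 ↑q.2
  | _, _ => False)

lemma glue_adj_inl_inl {ℓ : ℕ} {x y : ↥X} :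
    (glue H X ℓ).Adj (Sum.inl x) (Sum.inl y) ↔ H.Adj ↑x ↑y := by
  simp only [glue, fromRel_adj, ne_eq, Sum.inl.injEq]
  constructor
  · rintro ⟨hne, h | h⟩
    · exact h
    · exact h.symm
  · intro h
    exact ⟨fun hc => H.loopless.irrefl ↑x (by rw [hc] at h ⊢; exact (Subtype.ext_iff.mp hc ▸ h)), Or.inl h⟩

lemma glue_adj_inl_inr {ℓ : ℕ} {x : ↥X} {p : Fin ℓ × ↥(Xᶜ)} :
    (glue H X ℓ).Adj (Sum.inl x) (Sum.inr p) ↔ H.Adj ↑x ↑p.2 := by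
  simp only [glue, fromRel_adj, ne_eq]
  constructor
  · rintro ⟨hne, h | h⟩
    · exact h
    · exact h.elim
  · intro h
    exact ⟨by simp, Or.inl h⟩

lemma glue_adj_inr_inl {ℓ : ℕ} {x : ↥X} {p : Fin ℓ × ↥(Xᶜ)} :
    (glue H X ℓ).Adj (Sum.inr p) (Sum.inl x) ↔ H.Adj ↑x ↑p.2 := by
  rw [adj_comm, glue_adj_inl_inr]

lemma glue_adj_inr_inr {ℓ : ℕ} {p q : Fin ℓ × ↥(Xᶜ)} :
    (glue H X ℓ).Adj (Sum.inr p) (Sum.inr q) ↔ p.1 = q.1 ∧ H.Adj ↑p.2 ↑q.2 := by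
  simp only [glue, fromRel_adj, ne_eq, Sum.inr.injEq]
  constructor
  · rintro ⟨hne, ⟨h1, h2⟩ | ⟨h1, h2⟩⟩
    · exact ⟨h1, h2⟩
    · exact ⟨h1.symm, h2.symm⟩
  · rintro ⟨h1, h2⟩
    refine ⟨fun hc => ?_, Or.inl ⟨h1, h2⟩⟩
    rw [hc] at h2
    exact H.loopless.irrefl _ h2

end Glue

section Main

open SimpleGraph

lemma twAtMost_glue {V : Type*} [Fintype V] (H : SimpleGraph V) (X : Set V)
    (hX : X.Nonempty) (ℓ k : ℕ)
    (h : TreewidthAtMost (extGraph H X) k) : TreewidthAtMost (glue H X ℓ) k := by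
  classical
  obtain ⟨D, hD⟩ := h
  set K : SimpleGraph ↥(Xᶜ) := H.induce Xᶜ with hKdef
  obtain ⟨m, ⟨eC⟩⟩ := Finite.exists_equiv_fin K.ConnectedComponent
  set N : K.ConnectedComponent → Set V :=
    fun c => {x | x ∈ X ∧ ∃ w : ↥(Xᶜ), K.connectedComponentMk w = c ∧ H.Adj x ↑w} with hN
  have hclique : ∀ c, ∀ x ∈ (N c).toFinset, ∀ y ∈ (N c).toFinset, x ≠ y →
      (extGraph H X).Adj x y := by
    intro c x hx y hy hxy
    rw [Set.mem_toFinset] at hx hy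
    obtain ⟨hxX, w₁, hw₁, hadj₁⟩ := hx
    obtain ⟨hyX, w₂, hw₂, hadj₂⟩ := hy
    exact Or.inr ⟨hxy, hxX, hyX, w₁, w₂, hadj₁, hadj₂,
      (SimpleGraph.ConnectedComponent.eq).mp (hw₁.trans hw₂.symm)⟩
  obtain ⟨x₀, hx₀⟩ := hX
  obtain ⟨t₀, -⟩ := D.covers_vertex x₀
  have hrex : ∀ c : K.ConnectedComponent, ∃ t : D.ι, ∀ x ∈ N c, x ∈ D.bag t := by
    intro c
    by_cases hc : (N c).toFinset.Nonempty
    · obtain ⟨t, ht⟩ := clique_in_bag D (N c).toFinset (hclique c) hc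
      exact ⟨t, fun x hx => ht x (Set.mem_toFinset.mpr hx)⟩
    · refine ⟨t₀, fun x hx => absurd ⟨x, Set.mem_toFinset.mpr hx⟩ hc⟩
  choose r hrr using hrex
  set att : (Fin ℓ × Fin m) → D.ι := fun p => r (eC.symm p.2) with hatt
  set cmp : ↥(Xᶜ) → Fin m := fun w => eC (K.connectedComponentMk w) with hcmp
  set bag' : (D.ι ⊕ ((Fin ℓ × Fin m) × D.ι)) → Set (↥X ⊕ (Fin ℓ × ↥(Xᶜ))) := fun n =>
    match n with
    | Sum.inl t => Sum.inl '' {x : ↥X | ↑x ∈ D.bag t}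
    | Sum.inr ⟨⟨i, c⟩, t⟩ =>
        Sum.inl '' {x : ↥X | ↑x ∈ D.bag t ∧ (x : V) ∈ N (eC.symm c)} ∪
        (fun w : ↥(Xᶜ) => Sum.inr (i, w)) '' {w : ↥(Xᶜ) | ↑w ∈ D.bag t ∧ cmp w = c}
    with hbag'
  have hmem_inl : ∀ (t : D.ι) (v : ↥X ⊕ (Fin ℓ × ↥(Xᶜ))),
      v ∈ bag' (Sum.inl t) ↔ ∃ x : ↥X, v = Sum.inl x ∧ ↑x ∈ D.bag t := by
    intro t v
    constructor
    · rintro ⟨x, hx, rfl⟩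
      exact ⟨x, rfl, hx⟩
    · rintro ⟨x, rfl, hx⟩
      exact ⟨x, hx, rfl⟩
  have hmem_inr : ∀ (i : Fin ℓ) (c : Fin m) (t : D.ι) (v : ↥X ⊕ (Fin ℓ × ↥(Xᶜ))),
      v ∈ bag' (Sum.inr ⟨⟨i, c⟩, t⟩) ↔
        (∃ x : ↥X, v = Sum.inl x ∧ ↑x ∈ D.bag t ∧ (x : V) ∈ N (eC.symm c)) ∨
        (∃ w : ↥(Xᶜ), v = Sum.inr (i, w) ∧ ↑w ∈ D.bag t ∧ cmp w = c) := by
    intro i c t v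
    constructor
    · rintro (⟨x, hx, rfl⟩ | ⟨w, hw, rfl⟩)
      · exact Or.inl ⟨x, rfl, hx⟩
      · exact Or.inr ⟨w, rfl, hw⟩
    · rintro (⟨x, rfl, hx⟩ | ⟨w, rfl, hw⟩)
      · exact Or.inl ⟨x, hx, rfl⟩
      · exact Or.inr ⟨w, hw, rfl⟩
  refine ⟨⟨_, starGlue D.T att, starGlue_isTree D.T att D.tree, bag', ?_, ?_, ?_⟩, ?_⟩
  · -- covers_vertex
    intro v
    match v with
    | Sum.inl x =>
      obtain ⟨t, ht⟩ := D.covers_vertex ↑x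
      exact ⟨Sum.inl t, (hmem_inl t _).mpr ⟨x, rfl, ht⟩⟩
    | Sum.inr ⟨i, w⟩ =>
      obtain ⟨t, ht⟩ := D.covers_vertex ↑w
      exact ⟨Sum.inr ⟨⟨i, cmp w⟩, t⟩, (hmem_inr i (cmp w) t _).mpr (Or.inr ⟨w, rfl, ht, rfl⟩)⟩
  · -- covers_edge
    intro u v huv
    match u, v with
    | Sum.inl x, Sum.inl y =>
      have hxy : H.Adj ↑x ↑y := (glue_adj_inl_inl H X).mp huv
      obtain ⟨t, h1, h2⟩ := D.covers_edge (Or.inl hxy)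
      exact ⟨Sum.inl t, (hmem_inl t _).mpr ⟨x, rfl, h1⟩, (hmem_inl t _).mpr ⟨y, rfl, h2⟩⟩
    | Sum.inl x, Sum.inr ⟨i, w⟩ =>
      have hxw : H.Adj ↑x ↑w := (glue_adj_inl_inr H X).mp huv
      obtain ⟨t, h1, h2⟩ := D.covers_edge (Or.inl hxw)
      refine ⟨Sum.inr ⟨⟨i, cmp w⟩, t⟩,
        (hmem_inr _ _ _ _).mpr (Or.inl ⟨x, rfl, h1, ⟨x.2, w, ?_, hxw⟩⟩),
        (hmem_inr _ _ _ _).mpr (Or.inr ⟨w, rfl, h2, rfl⟩)⟩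
      simp [hcmp]
    | Sum.inr ⟨i, w⟩, Sum.inl x =>
      have hxw : H.Adj ↑x ↑w := (glue_adj_inr_inl H X).mp huv
      obtain ⟨t, h1, h2⟩ := D.covers_edge (Or.inl hxw)
      refine ⟨Sum.inr ⟨⟨i, cmp w⟩, t⟩,
        (hmem_inr _ _ _ _).mpr (Or.inr ⟨w, rfl, h2, rfl⟩),
        (hmem_inr _ _ _ _).mpr (Or.inl ⟨x, rfl, h1, ⟨x.2, w, ?_, hxw⟩⟩)⟩
      simp [hcmp]
    | Sum.inr ⟨i, w⟩, Sum.inr ⟨j, w'⟩ =>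
      obtain ⟨hij, hww'⟩ := (glue_adj_inr_inr H X).mp huv
      have hKadj : K.Adj w w' := hww'
      have hcc : cmp w' = cmp w := by
        simp only [hcmp]
        exact congrArg eC (SimpleGraph.ConnectedComponent.connectedComponentMk_eq_of_adj hKadj).symm
      obtain ⟨t, h1, h2⟩ := D.covers_edge (Or.inl hww')
      refine ⟨Sum.inr ⟨⟨i, cmp w⟩, t⟩,
        (hmem_inr _ _ _ _).mpr (Or.inr ⟨w, rfl, h1, rfl⟩),
        (hmem_inr _ _ _ _).mpr (Or.inr ⟨w', ?_, h2, hcc⟩)⟩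
      have hij' : i = j := hij
      rw [hij']
  · -- bags_connected
    intro v
    match v with
    | Sum.inr ⟨i, w⟩ =>
      set S : Set D.ι := {t | (w : V) ∈ D.bag t} with hS
      have hseteq : {n | Sum.inr (i, w) ∈ bag' n} =
          (fun t => (Sum.inr ⟨⟨i, cmp w⟩, t⟩ : D.ι ⊕ ((Fin ℓ × Fin m) × D.ι))) '' S := by
        ext n
        match n with
        | Sum.inl t =>
          simp only [Set.mem_setOf_eq, hmem_inl]
          constructor
          · rintro ⟨x, hx, -⟩
            exact absurd hx (by simp)
          · rintro ⟨s, -, hc⟩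
            exact absurd hc (by simp)
        | Sum.inr ⟨⟨i', c'⟩, t⟩ =>
          simp only [Set.mem_setOf_eq, hmem_inr]
          constructor
          · rintro (⟨x, hx, -⟩ | ⟨w', hw', hbag, hcmp'⟩)
            · exact absurd hx (by simp)
            · have hpe := Sum.inr.inj hw'
              rw [Prod.mk.injEq] at hpe
              obtain ⟨h1, h2⟩ := hpe
              subst h1
              subst h2
              refine ⟨t, hbag, ?_⟩
              rw [hcmp']
          · rintro ⟨s, hs, hc⟩
            have hpe := Sum.inr.inj hc
            rw [Prod.mk.injEq, Prod.mk.injEq] at hpe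
            obtain ⟨⟨h1, h2⟩, h3⟩ := hpe
            subst h1
            subst h2
            subst h3
            exact Or.inr ⟨w, rfl, hs, rfl⟩
      rw [hseteq]
      have hhom : ∀ st : {t // t ∈ S},
          (Sum.inr ⟨⟨i, cmp w⟩, (st : D.ι)⟩ : D.ι ⊕ ((Fin ℓ × Fin m) × D.ι)) ∈
            (fun t => (Sum.inr ⟨⟨i, cmp w⟩, t⟩ : D.ι ⊕ ((Fin ℓ × Fin m) × D.ι))) '' S :=
        fun st => ⟨st.1, st.2, rfl⟩
      have hconn := D.bags_connected (w : V)
      refine SimpleGraph.Connected.map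
        (f := ⟨fun st => ⟨Sum.inr ⟨⟨i, cmp w⟩, st.1⟩, hhom st⟩, ?_⟩) ?_ hconn
      · intro a b hab
        exact (starGlue_adj_inr_inr D.T att).mpr ⟨rfl, hab⟩
      · rintro ⟨n, hn⟩
        obtain ⟨t, ht, rfl⟩ := hn
        exact ⟨⟨t, ht⟩, rfl⟩
    | Sum.inl x =>
      set St : Set (D.ι ⊕ ((Fin ℓ × Fin m) × D.ι)) := {n | Sum.inl x ∈ bag' n} with hSt
      have hStl : ∀ t, Sum.inl t ∈ St ↔ (x : V) ∈ D.bag t := by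
        intro t
        simp only [hSt, Set.mem_setOf_eq, hmem_inl]
        constructor
        · rintro ⟨x', hx', h⟩
          rwa [Sum.inl.inj hx']
        · intro h
          exact ⟨x, rfl, h⟩
      have hStr : ∀ (i : Fin ℓ) (c : Fin m) (t), Sum.inr ⟨⟨i, c⟩, t⟩ ∈ St ↔
          ((x : V) ∈ D.bag t ∧ (x : V) ∈ N (eC.symm c)) := by
        intro i c t
        simp only [hSt, Set.mem_setOf_eq, hmem_inr]
        constructor
        · rintro (⟨x', hx', h1, h2⟩ | ⟨w', hw', -⟩)
          · rw [Sum.inl.inj hx']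
            exact ⟨h1, h2⟩
          · exact absurd hw' (by simp)
        · rintro ⟨h1, h2⟩
          exact Or.inl ⟨x, rfl, h1, h2⟩
      have hbconn := D.bags_connected (x : V)
      have hbase : ∀ (t₁ t₂ : D.ι) (h₁ : Sum.inl t₁ ∈ St) (h₂ : Sum.inl t₂ ∈ St),
          ((starGlue D.T att).induce St).Reachable ⟨Sum.inl t₁, h₁⟩ ⟨Sum.inl t₂, h₂⟩ := by
        intro t₁ t₂ h₁ h₂
        have hre := hbconn.preconnected ⟨t₁, (hStl t₁).mp h₁⟩ ⟨t₂, (hStl t₂).mp h₂⟩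
        exact Reachable.map
          (⟨fun st => ⟨Sum.inl st.1, (hStl st.1).mpr st.2⟩,
            fun hab => (starGlue_adj_inl_inl D.T att).mpr hab⟩ :
            (D.T.induce {t | (x : V) ∈ D.bag t}) →g ((starGlue D.T att).induce St)) hre
      have hcopy : ∀ (i : Fin ℓ) (c : Fin m) (t : D.ι) (h : Sum.inr ⟨⟨i, c⟩, t⟩ ∈ St),
          ∃ (t' : D.ι) (h' : Sum.inl t' ∈ St),
            ((starGlue D.T att).induce St).Reachable ⟨Sum.inr ⟨⟨i, c⟩, t⟩, h⟩ ⟨Sum.inl t', h'⟩ := by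
        intro i c t h
        obtain ⟨hbagt, hNx⟩ := (hStr i c t).mp h
        have hatt_bag : (x : V) ∈ D.bag (att (i, c)) := hrr (eC.symm c) _ hNx
        refine ⟨att (i, c), (hStl _).mpr hatt_bag, ?_⟩
        have hre := hbconn.preconnected ⟨t, hbagt⟩ ⟨att (i, c), hatt_bag⟩
        have step1 := Reachable.map
          (⟨fun st => ⟨Sum.inr ⟨⟨i, c⟩, st.1⟩, (hStr i c st.1).mpr ⟨st.2, hNx⟩⟩,
            fun hab => (starGlue_adj_inr_inr D.T att).mpr ⟨rfl, hab⟩⟩ :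
            (D.T.induce {t | (x : V) ∈ D.bag t}) →g ((starGlue D.T att).induce St)) hre
        refine step1.trans (Adj.reachable ?_)
        have : (starGlue D.T att).Adj (Sum.inr ⟨⟨i, c⟩, att (i, c)⟩) (Sum.inl (att (i, c))) :=
          (starGlue_adj_inr_inl D.T att).mpr ⟨rfl, rfl⟩
        exact this
      rw [connected_iff]
      constructor
      · rintro ⟨na, hna⟩ ⟨nb, hnb⟩
        match na, hna, nb, hnb with
        | Sum.inl t₁, h₁, Sum.inl t₂, h₂ => exact hbase t₁ t₂ h₁ h₂
        | Sum.inl t₁, h₁, Sum.inr ⟨⟨i, c⟩, t⟩, h₂ =>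
          obtain ⟨t', h', hre⟩ := hcopy i c t h₂
          exact (hbase t₁ t' h₁ h').trans hre.symm
        | Sum.inr ⟨⟨i, c⟩, t⟩, h₁, Sum.inl t₂, h₂ =>
          obtain ⟨t', h', hre⟩ := hcopy i c t h₁
          exact hre.trans (hbase t' t₂ h' h₂)
        | Sum.inr ⟨⟨i, c⟩, t⟩, h₁, Sum.inr ⟨⟨i', c'⟩, t'⟩, h₂ =>
          obtain ⟨s, hs, hre₁⟩ := hcopy i c t h₁
          obtain ⟨s', hs', hre₂⟩ := hcopy i' c' t' h₂
          exact (hre₁.trans (hbase s s' hs hs')).trans hre₂.symm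
      · obtain ⟨t, ht⟩ := D.covers_vertex (x : V)
        exact ⟨⟨Sum.inl t, (hStl t).mpr ht⟩⟩
  · -- width
    intro n
    match n with
    | Sum.inl t =>
      have h1 : (bag' (Sum.inl t)).ncard = {x : ↥X | ↑x ∈ D.bag t}.ncard :=
        Set.ncard_image_of_injective _ Sum.inl_injective
      have h2 : {x : ↥X | ↑x ∈ D.bag t}.ncard =
          (Subtype.val '' {x : ↥X | ↑x ∈ D.bag t}).ncard :=
        (Set.ncard_image_of_injective _ Subtype.val_injective).symm
      have h3 : Subtype.val '' {x : ↥X | ↑x ∈ D.bag t} ⊆ D.bag t := by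
        rintro v ⟨x, hx, rfl⟩
        exact hx
      calc (bag' (Sum.inl t)).ncard
          = (Subtype.val '' {x : ↥X | ↑x ∈ D.bag t}).ncard := h1.trans h2
        _ ≤ (D.bag t).ncard := Set.ncard_le_ncard h3 (Set.toFinite _)
        _ ≤ k + 1 := hD t
    | Sum.inr ⟨⟨i, c⟩, t⟩ =>
      set F : (↥X ⊕ (Fin ℓ × ↥(Xᶜ))) → V := Sum.elim Subtype.val (fun p => ↑p.2) with hF
      have hinj : Set.InjOn F (bag' (Sum.inr ⟨⟨i, c⟩, t⟩)) := by
        intro a ha b hb hab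
        rw [hmem_inr] at ha hb
        rcases ha with ⟨xa, rfl, hxa, -⟩ | ⟨wa, rfl, hwa, -⟩ <;>
          rcases hb with ⟨xb, rfl, hxb, -⟩ | ⟨wb, rfl, hwb, -⟩
        · simp only [hF, Sum.elim_inl] at hab
          rw [Subtype.ext hab]
        · simp only [hF, Sum.elim_inl, Sum.elim_inr] at hab
          exfalso
          have hxX : (xa : V) ∈ X := xa.2
          rw [hab] at hxX
          exact wb.2 hxX
        · simp only [hF, Sum.elim_inl, Sum.elim_inr] at hab
          exfalso
          have hxX : (xb : V) ∈ X := xb.2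
          rw [← hab] at hxX
          exact wa.2 hxX
        · simp only [hF, Sum.elim_inr] at hab
          rw [Subtype.ext hab]
      have hsub : F '' (bag' (Sum.inr ⟨⟨i, c⟩, t⟩)) ⊆ D.bag t := by
        rintro v ⟨a, ha, rfl⟩
        rw [hmem_inr] at ha
        rcases ha with ⟨x, rfl, hx, -⟩ | ⟨w', rfl, hw', -⟩
        · exact hx
        · exact hw'
      calc (bag' (Sum.inr ⟨⟨i, c⟩, t⟩)).ncard
          = (F '' (bag' (Sum.inr ⟨⟨i, c⟩, t⟩))).ncard := (Set.ncard_image_of_injOn hinj).symm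
        _ ≤ (D.bag t).ncard := Set.ncard_le_ncard hsub (Set.toFinite _)
        _ ≤ k + 1 := hD t

end Main

section Counting

variable {V W : Type*} (H : SimpleGraph V) (X : Set V) (G : SimpleGraph W)

/-- homomorphisms of `H` extending a given assignment on `X` -/
abbrev Ext (a : ↥X → W) : Type _ := {h : H →g G // ∀ x : ↥X, h ↑x = a x}

instance instFiniteHom [Finite V] [Finite W] : Finite (H →g G) :=
  Finite.of_injective (fun f => (f : V → W)) DFunLike.coe_injective

/-- the number of homomorphisms of `H` extending a given assignment on `X` -/
noncomputable def nExt (a : ↥X → W) : ℕ := Nat.card (Ext H X G a)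

/-- homomorphism out of the glued graph determined by an assignment and extensions -/
def mkGlueHom {ℓ : ℕ} (hℓ : 0 < ℓ) (a : ↥X → W) (g : Fin ℓ → Ext H X G a) :
    glue H X ℓ →g G where
  toFun := Sum.elim (fun x => a x) (fun p => (g p.1).1 ↑p.2)
  map_rel' := by
    intro u v huv
    match u, v with
    | Sum.inl x, Sum.inl y =>
      have h := (glue_adj_inl_inl H X).mp huv
      have h2 := (g ⟨0, hℓ⟩).1.map_adj h
      rw [(g ⟨0, hℓ⟩).2 x, (g ⟨0, hℓ⟩).2 y] at h2
      exact h2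
    | Sum.inl x, Sum.inr p =>
      have h := (glue_adj_inl_inr H X).mp huv
      have h2 := (g p.1).1.map_adj h
      rw [(g p.1).2 x] at h2
      exact h2
    | Sum.inr p, Sum.inl x =>
      have h := (glue_adj_inr_inl H X).mp huv
      have h2 := (g p.1).1.map_adj h.symm
      rw [(g p.1).2 x] at h2
      exact h2
    | Sum.inr p, Sum.inr q =>
      have h := (glue_adj_inr_inr H X).mp huv
      have h2 := (g q.1).1.map_adj h.2
      have h1 : p.1 = q.1 := h.1
      show G.Adj ((g p.1).1 ↑p.2) ((g q.1).1 ↑q.2)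
      rw [h1]
      exact h2

lemma card_glueHom [Fintype V] [Finite W] {ℓ : ℕ} (hℓ : 0 < ℓ) :
    Nat.card (glue H X ℓ →g G) = Nat.card (Σ a : ↥X → W, Fin ℓ → Ext H X G a) := by
  classical
  refine (Nat.card_eq_of_bijective (fun s => mkGlueHom H X G hℓ s.1 s.2) ⟨?_, ?_⟩).symm
  · rintro ⟨a, g⟩ ⟨a', g'⟩ hfg
    have happ : ∀ v, mkGlueHom H X G hℓ a g v = mkGlueHom H X G hℓ a' g' v :=
      fun v => congrFun (congrArg (fun (f : glue H X ℓ →g G) => (f : _ → W)) hfg) v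
    have ha : a = a' := funext fun x => happ (Sum.inl x)
    subst ha
    have hg : g = g' := by
      funext i
      apply Subtype.ext
      apply DFunLike.ext
      intro v
      by_cases hv : v ∈ X
      · rw [show v = ((⟨v, hv⟩ : ↥X) : V) from rfl, (g i).2 ⟨v, hv⟩, (g' i).2 ⟨v, hv⟩]
      · exact happ (Sum.inr (i, ⟨v, hv⟩))
    rw [hg]
  · intro φ
    have hmk : ∀ i : Fin ℓ, ∃ h : H →g G, (∀ x : ↥X, h ↑x = φ (Sum.inl x)) ∧
        (∀ w : ↥(Xᶜ), h ↑w = φ (Sum.inr (i, w))) := by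
      intro i
      refine ⟨⟨fun v => φ (if hv : v ∈ X then Sum.inl ⟨v, hv⟩ else Sum.inr (i, ⟨v, hv⟩)), ?_⟩,
        ?_, ?_⟩
      · intro u v h
        show G.Adj (φ (if hu : u ∈ X then Sum.inl ⟨u, hu⟩ else Sum.inr (i, ⟨u, hu⟩)))
          (φ (if hv : v ∈ X then Sum.inl ⟨v, hv⟩ else Sum.inr (i, ⟨v, hv⟩)))
        by_cases hu : u ∈ X <;> by_cases hv : v ∈ X
        · rw [dif_pos hu, dif_pos hv]
          exact φ.map_adj ((glue_adj_inl_inl H X).mpr h)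
        · rw [dif_pos hu, dif_neg hv]
          exact φ.map_adj ((glue_adj_inl_inr H X).mpr h)
        · rw [dif_neg hu, dif_pos hv]
          exact φ.map_adj ((glue_adj_inr_inl H X).mpr h.symm)
        · rw [dif_neg hu, dif_neg hv]
          exact φ.map_adj ((glue_adj_inr_inr H X).mpr ⟨rfl, h⟩)
      · intro x
        show φ (if hv : (x : V) ∈ X then Sum.inl ⟨↑x, hv⟩ else Sum.inr (i, ⟨↑x, hv⟩)) = _
        rw [dif_pos x.2]
      · intro w
        show φ (if hv : (w : V) ∈ X then Sum.inl ⟨↑w, hv⟩ else Sum.inr (i, ⟨↑w, hv⟩)) = _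
        rw [dif_neg (by exact w.2)]
    choose hh hh1 hh2 using hmk
    refine ⟨⟨fun x => φ (Sum.inl x), fun i => ⟨hh i, hh1 i⟩⟩, ?_⟩
    apply DFunLike.ext
    intro v
    match v with
    | Sum.inl x => rfl
    | Sum.inr p =>
      show (hh p.1) ↑p.2 = φ (Sum.inr p)
      rw [hh2 p.1 p.2]

lemma card_answers [Fintype V] [Finite W] :
    Nat.card ↥(Answers H X G) = Nat.card {a : ↥X → W // nExt H X G a ≠ 0} := by
  apply Nat.card_congr
  apply Equiv.subtypeEquivRight
  intro a
  show (∃ h : H →g G, ∀ x : ↥X, h ↑x = a x) ↔ _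
  have hfin : Finite (Ext H X G a) := inferInstance
  constructor
  · rintro ⟨h, hp⟩ hcon
    rcases Nat.card_eq_zero.mp hcon with h1 | h2
    · exact h1.false ⟨h, hp⟩
    · exact not_finite_iff_infinite.mpr h2 hfin
  · intro hne
    have hnon : Nonempty (Ext H X G a) := by
      by_contra hemp
      exact hne (Nat.card_eq_zero.mpr (Or.inl (not_nonempty_iff.mp hemp)))
    obtain ⟨⟨h, hp⟩⟩ := hnon
    exact ⟨h, hp⟩

end Counting

section PowSums

open Finset

lemma count_fiber {A : Type*} [Fintype A] (f : A → ℕ) (M : ℕ) (hfB : ∀ a, f a ≤ M) :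
    (Finset.univ.filter (fun a => f a ≠ 0)).card =
      ∑ j ∈ Finset.Icc 1 M, (Finset.univ.filter (fun a => f a = j)).card := by
  classical
  rw [eq_comm]
  have hmaps : ∀ a ∈ Finset.univ.filter (fun a => f a ≠ 0), f a ∈ Finset.Icc 1 M := by
    intro a ha
    rw [Finset.mem_filter] at ha
    rw [Finset.mem_Icc]
    exact ⟨Nat.one_le_iff_ne_zero.mpr ha.2, hfB a⟩
  rw [Finset.card_eq_sum_card_fiberwise hmaps]
  apply Finset.sum_congr rfl
  intro j hj
  rw [Finset.mem_Icc] at hj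
  congr 1
  ext a
  simp only [Finset.mem_filter, Finset.mem_univ, true_and, ne_eq]
  omega

lemma powsum_fiber {A : Type*} [Fintype A] (f : A → ℕ) (M ℓ : ℕ) (hfB : ∀ a, f a ≤ M)
    (hℓ : 0 < ℓ) :
    ∑ a, f a ^ ℓ =
      ∑ j ∈ Finset.Icc 1 M, (Finset.univ.filter (fun a => f a = j)).card * j ^ ℓ := by
  classical
  have hmaps : ∀ a ∈ Finset.univ, f a ∈ Finset.Icc 0 M := by
    intro a _
    rw [Finset.mem_Icc]
    exact ⟨Nat.zero_le _, hfB a⟩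
  rw [← Finset.sum_fiberwise_of_maps_to hmaps (fun a => f a ^ ℓ)]
  have hsplit : Finset.Icc 0 M = insert 0 (Finset.Icc 1 M) := by
    ext j
    simp only [Finset.mem_Icc, Finset.mem_insert]
    omega
  rw [hsplit, Finset.sum_insert (by simp)]
  have hzero : ∑ a ∈ Finset.univ.filter (fun a => f a = 0), f a ^ ℓ = 0 := by
    apply Finset.sum_eq_zero
    intro a ha
    rw [Finset.mem_filter] at ha
    rw [ha.2]
    exact zero_pow (by omega)
  rw [hzero, zero_add]
  apply Finset.sum_congr rfl
  intro j hj
  rw [Finset.mem_Icc] at hj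
  rw [Finset.sum_congr rfl (fun a ha => by rw [(Finset.mem_filter.mp ha).2]),
    Finset.sum_const, smul_eq_mul]

lemma count_eq_of_powsums {A₁ A₂ : Type*} [Fintype A₁] [Fintype A₂]
    (f : A₁ → ℕ) (g : A₂ → ℕ) (M : ℕ) (hf : ∀ a, f a ≤ M) (hg : ∀ b, g b ≤ M)
    (hsum : ∀ ℓ : ℕ, 0 < ℓ → ℓ ≤ M → ∑ a, f a ^ ℓ = ∑ b, g b ^ ℓ) :
    (Finset.univ.filter (fun a => f a ≠ 0)).card =
      (Finset.univ.filter (fun b => g b ≠ 0)).card := by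
  classical
  set c : ℕ → ℕ := fun j => (Finset.univ.filter (fun a => f a = j)).card with hc
  set d : ℕ → ℕ := fun j => (Finset.univ.filter (fun b => g b = j)).card with hd
  -- the linear system
  have hsys : ∀ ℓ : ℕ, 0 < ℓ → ℓ ≤ M →
      ∑ j ∈ Finset.Icc 1 M, c j * j ^ ℓ = ∑ j ∈ Finset.Icc 1 M, d j * j ^ ℓ := by
    intro ℓ h1 h2
    simp only [hc, hd]
    rw [← powsum_fiber f M ℓ hf h1, ← powsum_fiber g M ℓ hg h1]
    exact hsum ℓ h1 h2
  -- conclude c = d on Icc 1 M via a Vandermonde argument over ℚ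
  have hcd : ∀ j ∈ Finset.Icc 1 M, c j = d j := by
    set v : Fin M → ℚ := fun i => (i : ℚ) + 1 with hv
    set A : Matrix (Fin M) (Fin M) ℚ := fun l i => v i ^ ((l : ℕ) + 1) with hA
    set u : Fin M → ℚ := fun i => (c ((i : ℕ) + 1) : ℚ) - (d ((i : ℕ) + 1) : ℚ) with hu
    have hreindex : ∀ (e : ℕ → ℕ) (ℓ : ℕ),
        ((∑ j ∈ Finset.Icc 1 M, e j * j ^ ℓ : ℕ) : ℚ) =
          ∑ i : Fin M, (e ((i : ℕ) + 1) : ℚ) * v i ^ ℓ := by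
      intro e ℓ
      rw [Nat.cast_sum]
      rw [show Finset.Icc 1 M = Finset.Ico 1 (M + 1) by rw [Finset.Ico_add_one_right_eq_Icc]]
      rw [Finset.sum_Ico_eq_sum_range]
      simp only [Nat.add_sub_cancel]
      rw [← Fin.sum_univ_eq_sum_range (fun i => ((e (1 + i) * (1 + i) ^ ℓ : ℕ) : ℚ)) M]
      apply Finset.sum_congr rfl
      intro i _
      simp only [hv]
      rw [add_comm 1 (i : ℕ)]
      push_cast
      ring
    have hAu : A.mulVec u = 0 := by
      funext l
      simp only [Matrix.mulVec, dotProduct, Pi.zero_apply]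
      have : ∑ i, A l i * u i =
          (∑ i : Fin M, (c ((i : ℕ) + 1) : ℚ) * v i ^ ((l : ℕ) + 1)) -
          (∑ i : Fin M, (d ((i : ℕ) + 1) : ℚ) * v i ^ ((l : ℕ) + 1)) := by
        rw [← Finset.sum_sub_distrib]
        apply Finset.sum_congr rfl
        intro i _
        rw [hA, hu]
        ring
      rw [this, ← hreindex c ((l : ℕ) + 1), ← hreindex d ((l : ℕ) + 1),
        hsys ((l : ℕ) + 1) (by omega) (by omega)]
      ring
    have hdet : A.det ≠ 0 := by
      have hAT : A = (Matrix.diagonal v * Matrix.vandermonde v).transpose := by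
        ext l i
        rw [Matrix.transpose_apply, Matrix.diagonal_mul, Matrix.vandermonde_apply]
        rw [hA]
        show v i ^ ((l : ℕ) + 1) = v i * v i ^ (l : ℕ)
        rw [pow_succ]
        ring
      rw [hAT, Matrix.det_transpose, Matrix.det_mul, Matrix.det_diagonal,
        Matrix.det_vandermonde]
      apply mul_ne_zero
      · apply Finset.prod_ne_zero_iff.mpr
        intro i _
        simp only [hv]
        positivity
      · apply Finset.prod_ne_zero_iff.mpr
        intro i _
        apply Finset.prod_ne_zero_iff.mpr
        intro j hj
        rw [Finset.mem_Ioi] at hj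
        simp only [hv]
        have hij : ((i : ℕ) : ℚ) < ((j : ℕ) : ℚ) := by exact_mod_cast hj
        intro hcon
        nlinarith
    have hu0 : u = 0 := by
      have h1 : A⁻¹ * A = 1 := Matrix.nonsing_inv_mul A (Ne.isUnit hdet)
      calc u = (1 : Matrix (Fin M) (Fin M) ℚ).mulVec u := by rw [Matrix.one_mulVec]
        _ = (A⁻¹ * A).mulVec u := by rw [h1]
        _ = A⁻¹.mulVec (A.mulVec u) := by rw [Matrix.mulVec_mulVec]
        _ = A⁻¹.mulVec 0 := by rw [hAu]
        _ = 0 := Matrix.mulVec_zero _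
    intro j hj
    rw [Finset.mem_Icc] at hj
    have hjM : j - 1 < M := by omega
    have hval := congrFun hu0 ⟨j - 1, hjM⟩
    rw [hu] at hval
    simp only [Pi.zero_apply, sub_eq_zero] at hval
    have hj1 : ((⟨j - 1, hjM⟩ : Fin M) : ℕ) + 1 = j := by
      simp only [Fin.val_mk]
      omega
    rw [hj1] at hval
    exact_mod_cast hval
  rw [count_fiber f M hf, count_fiber g M hg]
  exact Finset.sum_congr rfl hcd

end PowSums

lemma hom_card_congr {A B C : Type*} {G₁ : SimpleGraph A} {G₂ : SimpleGraph B}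
    (e : G₁ ≃g G₂) (G₃ : SimpleGraph C) :
    Nat.card (G₂ →g G₃) = Nat.card (G₁ →g G₃) := by
  apply Nat.card_congr
  refine ⟨fun f => f.comp e.toHom, fun f => f.comp e.symm.toHom, ?_, ?_⟩
  · intro f
    apply DFunLike.ext
    intro v
    show f (e.toHom (e.symm.toHom v)) = f v
    simp
  · intro f
    apply DFunLike.ext
    intro v
    show f (e.symm.toHom (e.toHom v)) = f v
    simp

lemma card_sigma_ext {V W : Type*} [Fintype V] [Finite W] (H : SimpleGraph V) (X : Set V)
    (G : SimpleGraph W) [Fintype (↥X → W)] (ℓ : ℕ) :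
    Nat.card (Σ a : ↥X → W, Fin ℓ → Ext H X G a) = ∑ a : ↥X → W, nExt H X G a ^ ℓ := by
  classical
  letI inst : ∀ a : ↥X → W, Fintype (Ext H X G a) := fun a => Fintype.ofFinite _
  rw [Nat.card_eq_fintype_card, Fintype.card_sigma]
  apply Finset.sum_congr rfl
  intro a _
  rw [Fintype.card_fun, nExt, Nat.card_eq_fintype_card, Fintype.card_fin]

end Stmt19Aux
/-- **upper bound on the WL-dimension.** Let `(H,X)` be a counting
minimal (formalised via the relevant property that every endomorphism of `H` mapping
`X` surjectively onto `X` is an automorphism) connected conjunctive query with at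
least one free variable.  If two graphs `G` and `G'` satisfy
`|Hom(T,G)| = |Hom(T,G')|` for every (finite) graph `T` of treewidth at most the
extension width `tw(Γ(H,X))`, then `|Ans((H,X),G)| = |Ans((H,X),G')|`. -/
theorem stmt19 {V : Type*} [Fintype V]
    (H : SimpleGraph V) (X : Set V)
    (hconn : H.Connected) (hne : X.Nonempty)
    (hmin : ∀ h : H →g H, Set.MapsTo ⇑h X X → Set.SurjOn ⇑h X X →
      ∃ g : H ≃g H, ∀ v, g v = h v)
    {W₁ W₂ : Type} [Fintype W₁] [Fintype W₂]
    (G : SimpleGraph W₁) (G' : SimpleGraph W₂)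
    (hwl : ∀ (α : Type) [Fintype α] (T : SimpleGraph α),
      treewidth T ≤ treewidth (extGraph H X) →
      Nat.card (T →g G) = Nat.card (T →g G')) :
    Nat.card ↥(Answers H X G) = Nat.card ↥(Answers H X G') := by
  classical
  open Stmt19Aux in
  haveI : Fintype ↥X := Fintype.ofFinite _
  haveI : Fintype ↥(Xᶜ) := Fintype.ofFinite _
  have hmemtriv : Fintype.card V ∈ {k | TreewidthAtMost (extGraph H X) k} :=
    Stmt19Aux.twAtMost_trivial (extGraph H X)
  have hΓset : TreewidthAtMost (extGraph H X) (treewidth (extGraph H X)) :=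
    Nat.sInf_mem ⟨Fintype.card V, hmemtriv⟩
  have key : ∀ ℓ : ℕ, Nat.card (Stmt19Aux.glue H X ℓ →g G) =
      Nat.card (Stmt19Aux.glue H X ℓ →g G') := by
    intro ℓ
    obtain ⟨n, ⟨e⟩⟩ := Finite.exists_equiv_fin (↥X ⊕ (Fin ℓ × ↥(Xᶜ)))
    set T₀ : SimpleGraph (Fin n) := SimpleGraph.comap (⇑e.symm) (Stmt19Aux.glue H X ℓ)
      with hT₀
    have iso : Stmt19Aux.glue H X ℓ ≃g T₀ := by
      refine ⟨e, ?_⟩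
      intro a b
      show T₀.Adj (e a) (e b) ↔ _
      rw [hT₀]
      rw [SimpleGraph.comap_adj]
      simp
    have htw : treewidth T₀ ≤ treewidth (extGraph H X) := by
      apply Nat.sInf_le
      exact Stmt19Aux.twAtMost_of_iso iso
        (Stmt19Aux.twAtMost_glue H X hne ℓ _ hΓset)
    have hcards := hwl (Fin n) T₀ htw
    rw [Stmt19Aux.hom_card_congr iso G, Stmt19Aux.hom_card_congr iso G'] at hcards
    exact hcards
  set M := (max (Fintype.card W₁) (Fintype.card W₂)) ^ (Fintype.card V) with hM
  have hboundG : ∀ a : ↥X → W₁, Stmt19Aux.nExt H X G a ≤ M := by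
    intro a
    have h1 : Nat.card (Stmt19Aux.Ext H X G a) ≤ Nat.card (H →g G) :=
      Nat.card_le_card_of_injective Subtype.val Subtype.val_injective
    have h2 : Nat.card (H →g G) ≤ Nat.card (V → W₁) :=
      Nat.card_le_card_of_injective (fun f => (f : V → W₁)) DFunLike.coe_injective
    have h3 : Nat.card (V → W₁) = Fintype.card W₁ ^ Fintype.card V := by
      rw [Nat.card_fun, Nat.card_eq_fintype_card, Nat.card_eq_fintype_card]
    calc Stmt19Aux.nExt H X G a ≤ Nat.card (V → W₁) := le_trans h1 h2
      _ = Fintype.card W₁ ^ Fintype.card V := h3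
      _ ≤ M := by rw [hM]; exact Nat.pow_le_pow_left (le_max_left _ _) _
  have hboundG' : ∀ a : ↥X → W₂, Stmt19Aux.nExt H X G' a ≤ M := by
    intro a
    have h1 : Nat.card (Stmt19Aux.Ext H X G' a) ≤ Nat.card (H →g G') :=
      Nat.card_le_card_of_injective Subtype.val Subtype.val_injective
    have h2 : Nat.card (H →g G') ≤ Nat.card (V → W₂) :=
      Nat.card_le_card_of_injective (fun f => (f : V → W₂)) DFunLike.coe_injective
    have h3 : Nat.card (V → W₂) = Fintype.card W₂ ^ Fintype.card V := by
      rw [Nat.card_fun, Nat.card_eq_fintype_card, Nat.card_eq_fintype_card]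
    calc Stmt19Aux.nExt H X G' a ≤ Nat.card (V → W₂) := le_trans h1 h2
      _ = Fintype.card W₂ ^ Fintype.card V := h3
      _ ≤ M := by rw [hM]; exact Nat.pow_le_pow_left (le_max_right _ _) _
  have hpows : ∀ ℓ : ℕ, 0 < ℓ → ℓ ≤ M →
      ∑ a : ↥X → W₁, Stmt19Aux.nExt H X G a ^ ℓ =
        ∑ b : ↥X → W₂, Stmt19Aux.nExt H X G' b ^ ℓ := by
    intro ℓ hl _
    rw [← Stmt19Aux.card_sigma_ext H X G ℓ, ← Stmt19Aux.card_sigma_ext H X G' ℓ]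
    rw [← Stmt19Aux.card_glueHom H X G hl, ← Stmt19Aux.card_glueHom H X G' hl]
    exact key ℓ
  rw [Stmt19Aux.card_answers H X G, Stmt19Aux.card_answers H X G']
  have hs1 : Nat.card {a : ↥X → W₁ // Stmt19Aux.nExt H X G a ≠ 0} =
      (Finset.univ.filter (fun a : ↥X → W₁ => Stmt19Aux.nExt H X G a ≠ 0)).card := by
    rw [Nat.card_eq_fintype_card, Fintype.card_subtype]
  have hs2 : Nat.card {b : ↥X → W₂ // Stmt19Aux.nExt H X G' b ≠ 0} =
      (Finset.univ.filter (fun b : ↥X → W₂ => Stmt19Aux.nExt H X G' b ≠ 0)).card := by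
    rw [Nat.card_eq_fintype_card, Fintype.card_subtype]
  rw [hs1, hs2]
  exact Stmt19Aux.count_eq_of_powsums _ _ M hboundG hboundG' hpows
end
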